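/- arXiv:1111.0608 — 11 statements merged into one kernel-verified Lean document; each statement's English description precedes it below -/
import Mathlib

section
/- Let N ≥ 1, let a_0 = 1 < a_1 < a_2 < ⋯ < a_N be real numbers, let m(𝐚) be the least natural number m such that ∑_{k=0}^{N-1} (a_k/a_N)^m < 1, and let δ > 0. If f : [0,δ] → ℝ is m(𝐚)-times continuously differentiable on [0,δ] and satisfies f(x) + f(a_1 x) + ⋯ + f(a_N x) = 0 for every x such that {x, a_1 x, …, a_N x} ⊆ [0,δ], then f is identically zero on [0,δ]. -/
/-- Let `N ≥ 1`, `a 0 = 1 < a 1 < ⋯ < a N`, let `m(𝐚)` be the least natural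
number `m` with `∑_{k=0}^{N-1} (a k / a N) ^ m < 1`, and let `δ > 0`. If `f` is
`m(𝐚)`-times continuously differentiable on `[0, δ]` and satisfies
`f x + f (a 1 * x) + ⋯ + f (a N * x) = 0` whenever `{x, a 1 * x, …, a N * x} ⊆ [0, δ]`,
then `f` vanishes identically on `[0, δ]`. -/
theorem stmt_0 (N : ℕ) (hN : 1 ≤ N) (a : ℕ → ℝ) (ha0 : a 0 = 1)
    (hmono : ∀ k, k < N → a k < a (k + 1)) (δ : ℝ) (hδ : 0 < δ) (f : ℝ → ℝ)
    (hf : ContDiffOn ℝ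
      ((sInf {m : ℕ | ∑ k ∈ Finset.range N, (a k / a N) ^ m < 1} : ℕ) : ℕ∞)
      f (Set.Icc 0 δ))
    (heq : ∀ x : ℝ, (∀ k ≤ N, a k * x ∈ Set.Icc 0 δ) →
      ∑ k ∈ Finset.range (N + 1), f (a k * x) = 0) :
    ∀ x ∈ Set.Icc 0 δ, f x = 0 := by
  set m : ℕ := sInf {m : ℕ | ∑ k ∈ Finset.range N, (a k / a N) ^ m < 1} with hm_def
  set t : Set ℝ := Set.Icc 0 δ with ht_def
  -- basic facts about a
  have key : ∀ l, l ≤ N → ∀ k, k < l → a k < a l := by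
    intro l
    induction l with
    | zero => intro _ k hk; omega
    | succ l ih =>
      intro hl k hk
      have hstep := hmono l (by omega)
      rcases Nat.lt_succ_iff_lt_or_eq.mp hk with h | h
      · exact (ih (by omega) k h).trans hstep
      · subst h; exact hstep
  have hone : ∀ k, k ≤ N → 1 ≤ a k := by
    intro k hk
    rcases Nat.eq_zero_or_pos k with h | h
    · subst h; simp [ha0]
    · have := key k hk 0 h; linarith [ha0 ▸ this]
  have hpos : ∀ k, k ≤ N → 0 < a k := fun k hk => lt_of_lt_of_le one_pos (hone k hk)
  have haN : 0 < a N := hpos N le_rfl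
  have hltN : ∀ k, k < N → a k < a N := fun k hk => key N le_rfl k hk
  -- m belongs to the set
  have hSne : {m : ℕ | ∑ k ∈ Finset.range N, (a k / a N) ^ m < 1}.Nonempty := by
    set r : ℝ := a (N - 1) / a N with hr_def
    have hr0 : 0 ≤ r := div_nonneg (le_of_lt (hpos _ (by omega))) haN.le
    have hr1 : r < 1 := by
      rw [hr_def, div_lt_one haN]
      exact hltN (N - 1) (by omega)
    obtain ⟨M, hM⟩ := exists_pow_lt_of_lt_one (show (0:ℝ) < 1 / N by positivity) hr1
    refine ⟨M, ?_⟩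
    have hbound : ∀ k ∈ Finset.range N, (a k / a N) ^ M ≤ r ^ M := by
      intro k hk
      rw [Finset.mem_range] at hk
      apply pow_le_pow_left₀ (div_nonneg (hpos k (by omega)).le haN.le)
      have hk' : a k ≤ a (N - 1) := by
        rcases Nat.lt_or_ge k (N - 1) with h | h
        · exact (key (N - 1) (by omega) k h).le
        · have : k = N - 1 := by omega
          subst this; rfl
      exact (div_le_div_iff_of_pos_right haN).mpr hk'
    calc ∑ k ∈ Finset.range N, (a k / a N) ^ M ≤ ∑ _k ∈ Finset.range N, r ^ M :=
          Finset.sum_le_sum hbound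
      _ = N * r ^ M := by rw [Finset.sum_const, Finset.card_range, nsmul_eq_mul]
      _ < N * (1 / N) := by
          apply mul_lt_mul_of_pos_left hM
          exact_mod_cast hN
      _ = 1 := by field_simp
  have hm_mem : ∑ k ∈ Finset.range N, (a k / a N) ^ m < 1 := Nat.sInf_mem hSne
  -- the small interval on which the functional equation holds
  set s : Set ℝ := Set.Icc 0 (δ / a N) with hs_def
  have hδs : 0 < δ / a N := div_pos hδ haN
  have hsu : UniqueDiffOn ℝ s := uniqueDiffOn_Icc hδs
  have htu : UniqueDiffOn ℝ t := uniqueDiffOn_Icc hδ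
  have hmaps : ∀ k, k ≤ N → Set.MapsTo (fun y => a k * y) s t := by
    intro k hk y hy
    obtain ⟨hy0, hy1⟩ := hy
    constructor
    · exact mul_nonneg (hpos k hk).le hy0
    · calc a k * y ≤ a N * (δ / a N) := by
            apply mul_le_mul ?_ hy1 hy0 haN.le
            rcases Nat.lt_or_ge k N with h | h
            · exact (hltN k h).le
            · have : k = N := by omega
              subst this; rfl
        _ = δ := by field_simp
  -- the differentiated functional equation
  have P : ∀ j, j ≤ m → ∀ x ∈ s,
      ∑ k ∈ Finset.range (N + 1), a k ^ j * iteratedDerivWithin j f t (a k * x) = 0 := by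
    intro j
    induction j with
    | zero =>
      intro _ x hx
      simp only [pow_zero, one_mul, iteratedDerivWithin_zero]
      exact heq x (fun k hk => hmaps k hk hx)
    | succ j ih =>
      intro hj x hx
      have hj' : j < m := hj
      have hdiff : DifferentiableOn ℝ (iteratedDerivWithin j f t) t :=
        hf.differentiableOn_iteratedDerivWithin (by exact_mod_cast hj') htu
      have hterm : ∀ k ∈ Finset.range (N + 1),
          HasDerivWithinAt (fun y => a k ^ j * iteratedDerivWithin j f t (a k * y))
            (a k ^ (j + 1) * iteratedDerivWithin (j + 1) f t (a k * x)) s x := by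
        intro k hk
        rw [Finset.mem_range] at hk
        have hkN : k ≤ N := by omega
        have h1 : HasDerivWithinAt (iteratedDerivWithin j f t)
            (iteratedDerivWithin (j + 1) f t (a k * x)) t (a k * x) := by
          have h := (hdiff (a k * x) (hmaps k hkN hx)).hasDerivWithinAt
          rwa [iteratedDerivWithin_succ]
        have h2 : HasDerivWithinAt (fun y : ℝ => a k * y) (a k) s x := by
          simpa using (hasDerivWithinAt_id x s).const_mul (a k)
        have h3 := (h1.comp x h2 (hmaps k hkN)).const_mul (a k ^ j)
        have : a k ^ j * (iteratedDerivWithin (j + 1) f t (a k * x) * a k)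
            = a k ^ (j + 1) * iteratedDerivWithin (j + 1) f t (a k * x) := by ring
        rw [this] at h3
        exact h3
      have hsum : HasDerivWithinAt
          (fun y => ∑ k ∈ Finset.range (N + 1), a k ^ j * iteratedDerivWithin j f t (a k * y))
          (∑ k ∈ Finset.range (N + 1), a k ^ (j + 1) * iteratedDerivWithin (j + 1) f t (a k * x))
          s x := HasDerivWithinAt.fun_sum hterm
      have hzero : HasDerivWithinAt
          (fun y => ∑ k ∈ Finset.range (N + 1), a k ^ j * iteratedDerivWithin j f t (a k * y))
          0 s x := by
        have heqz : Set.EqOn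
            (fun y => ∑ k ∈ Finset.range (N + 1), a k ^ j * iteratedDerivWithin j f t (a k * y))
            (fun _ => (0:ℝ)) s := fun y hy => ih (by omega) y hy
        exact (hasDerivWithinAt_const x s 0).congr (fun y hy => heqz hy) (heqz hx)
      exact ((hsu x hx).eq_deriv s hsum hzero)
  -- Step B: the m-th derivative vanishes on t, by a contraction argument
  have hcont : ContinuousOn (iteratedDerivWithin m f t) t :=
    hf.continuousOn_iteratedDerivWithin le_rfl htu
  have htne : t.Nonempty := ⟨0, by simp [ht_def, hδ.le]⟩
  obtain ⟨x₀, hx₀, hmax⟩ := isCompact_Icc.exists_isMaxOn htne (hcont.abs)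
  set M : ℝ := |iteratedDerivWithin m f t x₀| with hM_def
  have hmax' : ∀ y ∈ t, |iteratedDerivWithin m f t y| ≤ M := fun y hy => hmax hy
  have hbound : ∀ x ∈ t, |iteratedDerivWithin m f t x| ≤
      (∑ k ∈ Finset.range N, (a k / a N) ^ m) * M := by
    intro x hx
    obtain ⟨hx0, hx1⟩ := hx
    have hxs : x / a N ∈ s := by
      constructor
      · exact div_nonneg hx0 haN.le
      · exact (div_le_div_iff_of_pos_right haN).mpr hx1
    have hP := P m le_rfl (x / a N) hxs
    rw [Finset.sum_range_succ] at hP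
    have hxx : a N * (x / a N) = x := by field_simp
    rw [hxx] at hP
    have h1 : a N ^ m * iteratedDerivWithin m f t x =
        -∑ k ∈ Finset.range N, a k ^ m * iteratedDerivWithin m f t (a k * (x / a N)) := by
      linarith [hP]
    have h2 : |iteratedDerivWithin m f t x| * a N ^ m ≤
        ∑ k ∈ Finset.range N, a k ^ m * M := by
      calc |iteratedDerivWithin m f t x| * a N ^ m
            = |a N ^ m * iteratedDerivWithin m f t x| := by
              rw [abs_mul, abs_of_pos (pow_pos haN m)]; ring
          _ = |∑ k ∈ Finset.range N, a k ^ m * iteratedDerivWithin m f t (a k * (x / a N))| := by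
              rw [h1, abs_neg]
          _ ≤ ∑ k ∈ Finset.range N, |a k ^ m * iteratedDerivWithin m f t (a k * (x / a N))| :=
              Finset.abs_sum_le_sum_abs _ _
          _ ≤ ∑ k ∈ Finset.range N, a k ^ m * M := by
              apply Finset.sum_le_sum
              intro k hk
              rw [Finset.mem_range] at hk
              rw [abs_mul, abs_of_pos (pow_pos (hpos k (by omega)) m)]
              apply mul_le_mul_of_nonneg_left ?_ (pow_pos (hpos k (by omega)) m).le
              apply hmax'
              exact hmaps k (by omega) hxs
    have h3 : (∑ k ∈ Finset.range N, a k ^ m * M) =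
        ((∑ k ∈ Finset.range N, (a k / a N) ^ m) * M) * a N ^ m := by
      rw [Finset.sum_mul, Finset.sum_mul]
      apply Finset.sum_congr rfl
      intro k _
      rw [div_pow]
      field_simp
    rw [h3] at h2
    exact le_of_mul_le_mul_right h2 (pow_pos haN m)
  -- conclude M = 0, so the m-th derivative is zero
  have hgzero : ∀ x ∈ t, iteratedDerivWithin m f t x = 0 := by
    have hM0 : 0 ≤ M := abs_nonneg _
    have hMθ := hbound x₀ hx₀
    have hM : M ≤ 0 := by nlinarith [hm_mem]
    intro x hx
    have := (hmax' x hx).trans hM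
    exact abs_nonpos_iff.mp this
  -- Step C: downward induction
  have down : ∀ j, j < m → (∀ x ∈ t, iteratedDerivWithin (j + 1) f t x = 0) →
      ∀ x ∈ t, iteratedDerivWithin j f t x = 0 := by
    intro j hj hnext
    have hdiff : DifferentiableOn ℝ (iteratedDerivWithin j f t) t :=
      hf.differentiableOn_iteratedDerivWithin (by exact_mod_cast hj) htu
    have hconst := constant_of_derivWithin_zero (a := 0) (b := δ) hdiff ?_
    · intro x hx
      rw [hconst x hx]
      -- iteratedDerivWithin j f t 0 = 0 from P j at 0
      have h0s : (0:ℝ) ∈ s := by simp [hs_def, hδs.le]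
      have hP := P j hj.le 0 h0s
      have : ∀ k ∈ Finset.range (N + 1), a k ^ j * iteratedDerivWithin j f t (a k * 0)
          = a k ^ j * iteratedDerivWithin j f t 0 := by
        intro k _; rw [mul_zero]
      rw [Finset.sum_congr rfl this, ← Finset.sum_mul] at hP
      have hsumpos : 0 < ∑ k ∈ Finset.range (N + 1), a k ^ j := by
        apply Finset.sum_pos ?_ ⟨0, Finset.mem_range.mpr (by omega)⟩
        intro k hk
        rw [Finset.mem_range] at hk
        exact pow_pos (hpos k (by omega)) j
      exact (mul_eq_zero.mp hP).resolve_left (ne_of_gt hsumpos)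
    · intro x hx
      rw [← iteratedDerivWithin_succ]
      exact hnext x (Set.Ico_subset_Icc_self hx)
  have final : ∀ i, i ≤ m → ∀ x ∈ t, iteratedDerivWithin (m - i) f t x = 0 := by
    intro i
    induction i with
    | zero => intro _; simpa using hgzero
    | succ i ih =>
      intro hi
      have h1 : m - (i + 1) < m := by omega
      have h2 : m - (i + 1) + 1 = m - i := by omega
      apply down _ h1
      rw [h2]
      exact ih (by omega)
  intro x hx
  have := final m le_rfl x hx
  simpa using this
end

section
/- Let N ≥ 1, let a_0 = 1 < a_1 < a_2 < ⋯ < a_N be real numbers, let m(𝐚) be the least natural number m such that ∑_{k=0}^{N-1} (a_k/a_N)^m < 1, and let δ > 0. If f : [-δ,0] → ℝ is m(𝐚)-times continuously differentiable on [-δ,0] and satisfies f(x) + f(a_1 x) + ⋯ + f(a_N x) = 0 for every x such that {x, a_1 x, …, a_N x} ⊆ [-δ,0], then f is identically zero on [-δ,0]. -/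
open Finset Set

lemma aux_poly : ∀ (m : ℕ) (c : ℕ → ℝ) (C ε : ℝ), 0 < ε →
    (∀ x : ℝ, -ε ≤ x → x < 0 → |∑ j ∈ Finset.range m, c j * x ^ j| ≤ C * |x| ^ m) →
    ∀ j < m, c j = 0 := by
  intro m
  induction m with
  | zero => intro c C ε hε h j hj; omega
  | succ m ih =>
    intro c C ε hε h
    set K : ℝ := (∑ j ∈ Finset.range (m+1), |c j|) + |C| + 1 with hK
    have hKpos : 0 < K := by
      have h1 : 0 ≤ ∑ j ∈ Finset.range (m+1), |c j| := Finset.sum_nonneg fun j _ => abs_nonneg _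
      have h2 : 0 ≤ |C| := abs_nonneg _
      linarith
    have hsplit : ∀ x : ℝ, ∑ j ∈ Finset.range (m+1), c j * x ^ j
        = c 0 + x * ∑ j ∈ Finset.range m, c (j+1) * x ^ j := by
      intro x
      rw [Finset.sum_range_succ' (fun j => c j * x ^ j) m, Finset.mul_sum, pow_zero, mul_one,
        add_comm]
      congr 1
      exact Finset.sum_congr rfl fun j _ => by ring
    -- step 1 : c 0 = 0
    have hc0 : c 0 = 0 := by
      have key : ∀ t : ℝ, 0 < t → t ≤ ε → t ≤ 1 → |c 0| ≤ K * t := by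
        intro t ht htε ht1
        have hx := h (-t) (by linarith) (by linarith)
        have habs : |(-t : ℝ)| = t := by rw [abs_neg, abs_of_pos ht]
        rw [habs] at hx
        have htpow : t ^ (m+1) ≤ t := by
          calc t ^ (m+1) ≤ t ^ 1 := pow_le_pow_of_le_one (le_of_lt ht) ht1 (by omega)
          _ = t := pow_one t
        have h1 : C * t ^ (m+1) ≤ |C| * t := by
          calc C * t ^ (m+1) ≤ |C| * t ^ (m+1) := by
                apply mul_le_mul_of_nonneg_right (le_abs_self C) (by positivity)
          _ ≤ |C| * t := by apply mul_le_mul_of_nonneg_left htpow (abs_nonneg _)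
        have h2 : |∑ j ∈ Finset.range m, c (j+1) * (-t) ^ j| ≤
            (∑ j ∈ Finset.range (m+1), |c j|) := by
          calc |∑ j ∈ Finset.range m, c (j+1) * (-t) ^ j|
              ≤ ∑ j ∈ Finset.range m, |c (j+1) * (-t) ^ j| := Finset.abs_sum_le_sum_abs _ _
            _ ≤ ∑ j ∈ Finset.range m, |c (j+1)| := by
                apply Finset.sum_le_sum
                intro j _
                rw [abs_mul, abs_pow, abs_neg, abs_of_pos ht]
                calc |c (j+1)| * t ^ j ≤ |c (j+1)| * 1 := by
                      apply mul_le_mul_of_nonneg_left _ (abs_nonneg _)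
                      exact pow_le_one₀ (le_of_lt ht) ht1
                  _ = |c (j+1)| := mul_one _
            _ ≤ ∑ j ∈ Finset.range (m+1), |c j| := by
                rw [Finset.sum_range_succ' (fun j => |c j|) m]
                have : 0 ≤ |c 0| := abs_nonneg _
                linarith
        have heval := hsplit (-t)
        have : c 0 = (∑ j ∈ Finset.range (m+1), c j * (-t) ^ j)
            - (-t) * ∑ j ∈ Finset.range m, c (j+1) * (-t) ^ j := by
          rw [heval]; ring
        rw [this]
        calc |(∑ j ∈ Finset.range (m+1), c j * (-t) ^ j)
            - (-t) * ∑ j ∈ Finset.range m, c (j+1) * (-t) ^ j|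
            ≤ |∑ j ∈ Finset.range (m+1), c j * (-t) ^ j|
              + |(-t) * ∑ j ∈ Finset.range m, c (j+1) * (-t) ^ j| := abs_sub _ _
          _ ≤ C * t ^ (m+1) + t * (∑ j ∈ Finset.range (m+1), |c j|) := by
              apply add_le_add hx
              rw [abs_mul, abs_neg, abs_of_pos ht]
              exact mul_le_mul_of_nonneg_left h2 (le_of_lt ht)
          _ ≤ |C| * t + t * (∑ j ∈ Finset.range (m+1), |c j|) := by linarith
          _ ≤ K * t := by rw [hK]; ring_nf; nlinarith
      by_contra hc
      have hc' : 0 < |c 0| := abs_pos.mpr hc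
      set t := min ε (min 1 (|c 0| / (2 * K))) with htdef
      have ht : 0 < t := by
        apply lt_min hε
        apply lt_min one_pos
        positivity
      have h1 := key t ht (min_le_left _ _) ((min_le_right _ _).trans (min_le_left _ _))
      have h2 : t ≤ |c 0| / (2 * K) := (min_le_right _ _).trans (min_le_right _ _)
      have : K * t ≤ K * (|c 0| / (2 * K)) := mul_le_mul_of_nonneg_left h2 (le_of_lt hKpos)
      have heq2 : K * (|c 0| / (2 * K)) = |c 0| / 2 := by field_simp
      rw [heq2] at this
      nlinarith [h1, this, hc']
    -- step 2 : tail
    have htail : ∀ j < m, c (j+1) = 0 := by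
      apply ih (fun j => c (j+1)) C ε hε
      intro x hx1 hx2
      have hx := h x hx1 hx2
      have hxne : |x| ≠ 0 := by
        simp only [abs_ne_zero]; exact ne_of_lt hx2
      have hxpos : 0 < |x| := abs_pos.mpr (ne_of_lt hx2)
      have heval := hsplit x
      rw [hc0, zero_add] at heval
      rw [heval, abs_mul] at hx
      have : |x| * |∑ j ∈ Finset.range m, c (j+1) * x ^ j| ≤ |x| * (C * |x| ^ m) := by
        calc |x| * |∑ j ∈ Finset.range m, c (j+1) * x ^ j| ≤ C * |x| ^ (m+1) := hx
          _ = |x| * (C * |x| ^ m) := by ring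
      exact le_of_mul_le_mul_left this hxpos
    intro j hj
    match j with
    | 0 => exact hc0
    | j+1 => exact htail j (by omega)

open Finset Set
open scoped Nat

/-- Same as Statement 0 but on the interval `[-δ, 0]`. -/
theorem stmt_1 (N : ℕ) (hN : 1 ≤ N) (a : ℕ → ℝ) (ha0 : a 0 = 1)
    (hmono : ∀ k, k < N → a k < a (k + 1)) (δ : ℝ) (hδ : 0 < δ) (f : ℝ → ℝ)
    (hf : ContDiffOn ℝ
      ((sInf {m : ℕ | ∑ k ∈ Finset.range N, (a k / a N) ^ m < 1} : ℕ) : ℕ∞)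
      f (Set.Icc (-δ) 0))
    (heq : ∀ x : ℝ, (∀ k ≤ N, a k * x ∈ Set.Icc (-δ) 0) →
      ∑ k ∈ Finset.range (N + 1), f (a k * x) = 0) :
    ∀ x ∈ Set.Icc (-δ) 0, f x = 0 := by
  -- basic facts about `a`
  have h1 : ∀ k, k ≤ N → 1 ≤ a k := by
    intro k
    induction k with
    | zero => intro _; rw [ha0]
    | succ n ih =>
      intro h
      exact le_of_lt (lt_of_le_of_lt (ih (by omega)) (hmono n (by omega)))
  have hlt : ∀ k' ≤ N, ∀ k < k', a k < a k' := by
    intro k'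
    induction k' with
    | zero => intro _ k hk; omega
    | succ n ih =>
      intro h k hk
      have hn : a n < a (n + 1) := hmono n (by omega)
      rcases Nat.lt_succ_iff_lt_or_eq.mp hk with h' | h'
      · exact lt_trans (ih (by omega) k h') hn
      · subst h'; exact hn
  have haN : 0 < a N := lt_of_lt_of_le zero_lt_one (h1 N le_rfl)
  set b : ℕ → ℝ := fun k => a k / a N with hbdef
  have hb_pos : ∀ k ≤ N, 0 < b k := fun k hk =>
    div_pos (lt_of_lt_of_le zero_lt_one (h1 k hk)) haN
  have hb_lt : ∀ k < N, b k < 1 := fun k hk =>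
    (div_lt_one haN).mpr (hlt N le_rfl k hk)
  have hb_le1 : ∀ k ≤ N, b k ≤ 1 := by
    intro k hk
    rcases Nat.lt_or_ge k N with h | h
    · exact le_of_lt (hb_lt k h)
    · have : k = N := by omega
      subst this
      rw [hbdef]; simp [div_self (ne_of_gt haN)]
  set M : ℕ := sInf {m : ℕ | ∑ k ∈ Finset.range N, (a k / a N) ^ m < 1} with hMdef
  -- the defining set is nonempty, so `M` belongs to it
  have hSne : {m : ℕ | ∑ k ∈ Finset.range N, (a k / a N) ^ m < 1}.Nonempty := by
    set r : ℝ := a (N - 1) / a N with hrdef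
    have hr0 : 0 < r := div_pos (lt_of_lt_of_le zero_lt_one (h1 _ (by omega))) haN
    have hr1 : r < 1 := (div_lt_one haN).mpr (hlt N le_rfl (N - 1) (by omega))
    obtain ⟨n, hn⟩ := exists_pow_lt_of_lt_one (show (0:ℝ) < (N : ℝ)⁻¹ by positivity) hr1
    refine ⟨n, ?_⟩
    have hble : ∀ k < N, b k ≤ r := by
      intro k hk
      have hak : a k ≤ a (N - 1) := by
        rcases Nat.lt_or_ge k (N - 1) with h | h
        · exact le_of_lt (hlt (N - 1) (by omega) k h)
        · have : k = N - 1 := by omega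
          subst this; exact le_rfl
      exact (div_le_div_iff_of_pos_right haN).mpr hak
    calc ∑ k ∈ Finset.range N, (a k / a N) ^ n
        ≤ ∑ k ∈ Finset.range N, r ^ n := by
          apply Finset.sum_le_sum
          intro k hk
          exact pow_le_pow_left₀ (le_of_lt (hb_pos k (le_of_lt (Finset.mem_range.mp hk))))
            (hble k (Finset.mem_range.mp hk)) n
      _ = (N : ℝ) * r ^ n := by rw [Finset.sum_const, Finset.card_range, nsmul_eq_mul]
      _ < (N : ℝ) * (N : ℝ)⁻¹ := by
          apply mul_lt_mul_of_pos_left hn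
          positivity
      _ = 1 := by
          field_simp
  have hmS : M ∈ {m : ℕ | ∑ k ∈ Finset.range N, (a k / a N) ^ m < 1} := Nat.sInf_mem hSne
  have hq : ∑ k ∈ Finset.range N, b k ^ M < 1 := hmS
  have hM1 : 1 ≤ M := by
    by_contra h
    have hM0 : M = 0 := by omega
    rw [hM0] at hq
    simp only [pow_zero, Finset.sum_const, Finset.card_range, nsmul_eq_mul, mul_one] at hq
    have : (1 : ℝ) ≤ (N : ℝ) := by exact_mod_cast hN
    linarith
  -- functional equation in normalized form
  have heqN : ∀ y ∈ Set.Icc (-δ) 0, f y + ∑ k ∈ Finset.range N, f (b k * y) = 0 := by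
    intro y hy
    have hmem : ∀ k ≤ N, a k * (y / a N) ∈ Set.Icc (-δ) 0 := by
      intro k hk
      have hrw : a k * (y / a N) = b k * y := by
        rw [hbdef]; field_simp
      rw [hrw]
      constructor
      · have := mul_le_mul_of_nonpos_right (hb_le1 k hk) hy.2
        simp only [one_mul] at this
        linarith [hy.1]
      · exact mul_nonpos_of_nonneg_of_nonpos (le_of_lt (hb_pos k hk)) hy.2
    have h0 := heq (y / a N) hmem
    rw [Finset.sum_range_succ] at h0
    have hlast : a N * (y / a N) = y := by field_simp
    rw [hlast] at h0
    have hsum : ∑ k ∈ Finset.range N, f (a k * (y / a N))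
        = ∑ k ∈ Finset.range N, f (b k * y) := by
      apply Finset.sum_congr rfl
      intro k _
      congr 1
      rw [hbdef]; field_simp
    rw [hsum] at h0
    linarith
  -- Taylor expansion at 0 via the reflected function
  set g : ℝ → ℝ := fun y => f (-y) with hgdef
  have hmaps : Set.MapsTo (fun y : ℝ => -y) (Set.Icc 0 δ) (Set.Icc (-δ) 0) := by
    intro y hy
    simp only [Set.mem_Icc] at hy
    exact ⟨by show -δ ≤ -y; linarith [hy.2], by show -y ≤ (0:ℝ); linarith [hy.1]⟩
  have hg : ContDiffOn ℝ (M : ℕ∞) g (Set.Icc 0 δ) :=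
    ContDiffOn.comp hf (contDiff_neg.contDiffOn) hmaps
  have hu : UniqueDiffOn ℝ (Set.Icc (0:ℝ) δ) := uniqueDiffOn_Icc hδ
  have hcont : ContinuousOn (iteratedDerivWithin M g (Set.Icc 0 δ)) (Set.Icc 0 δ) :=
    hg.continuousOn_iteratedDerivWithin (le_refl _) hu
  obtain ⟨C, hC⟩ := (isCompact_Icc).exists_bound_of_continuousOn hcont
  have hC0 : 0 ≤ C := le_trans (norm_nonneg _) (hC 0 ⟨le_rfl, le_of_lt hδ⟩)
  set n : ℕ := M - 1 with hndef
  have hMn : n + 1 = M := by omega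
  have hg' : ContDiffOn ℝ (((n + 1 : ℕ)) : ℕ∞) g (Set.Icc 0 δ) := by
    rw [hMn]; exact hg
  have hC' : ∀ y ∈ Set.Icc (0:ℝ) δ, ‖iteratedDerivWithin (n + 1) g (Set.Icc 0 δ) y‖ ≤ C := by
    rw [hMn]; exact hC
  set d : ℕ → ℝ := fun j => iteratedDerivWithin j g (Set.Icc 0 δ) 0 with hddef
  set c : ℕ → ℝ := fun j => (-1 : ℝ) ^ j * ((j ! : ℝ)⁻¹) * d j with hcdef
  set CB : ℝ := C / (n !) with hCBdef
  have hCB0 : 0 ≤ CB := div_nonneg hC0 (by positivity)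
  have hbound : ∀ x ∈ Set.Icc (-δ) 0, |f x - ∑ j ∈ Finset.range M, c j * x ^ j|
      ≤ CB * |x| ^ M := by
    intro x hx
    have hx' : -x ∈ Set.Icc (0:ℝ) δ := ⟨by linarith [hx.2], by linarith [hx.1]⟩
    have htay := taylor_mean_remainder_bound (n := n) (le_of_lt hδ)
      (by exact_mod_cast hg') hx' hC'
    rw [taylor_within_apply] at htay
    have he1 : g (-x) = f x := by rw [hgdef]; simp
    have he2 : ∑ k ∈ Finset.range (n + 1), (((k ! : ℝ)⁻¹ * (-x - 0) ^ k) • d k)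
        = ∑ j ∈ Finset.range M, c j * x ^ j := by
      rw [hMn]
      apply Finset.sum_congr rfl
      intro j _
      rw [smul_eq_mul]
      show ((j ! : ℝ)⁻¹ * (-x - 0) ^ j) * d j = (-1 : ℝ) ^ j * ((j ! : ℝ)⁻¹) * d j * x ^ j
      rw [sub_zero, neg_pow x j]
      ring
    rw [he1, he2] at htay
    have he3 : C * (-x - 0) ^ (n + 1) / (n !) = CB * |x| ^ M := by
      rw [hCBdef, hMn, abs_of_nonpos hx.2]
      ring
    rw [he3] at htay
    exact_mod_cast htay
  -- coefficients of the Taylor polynomial vanish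
  have hcz : ∀ j < M, c j = 0 := by
    set cc : ℕ → ℝ := fun j => c j * (1 + ∑ k ∈ Finset.range N, b k ^ j) with hccdef
    have hmemb : ∀ x ∈ Set.Icc (-δ) (0:ℝ), ∀ k ≤ N, b k * x ∈ Set.Icc (-δ) 0 := by
      intro x hx k hk
      constructor
      · have := mul_le_mul_of_nonpos_right (hb_le1 k hk) hx.2
        simp only [one_mul] at this
        linarith [hx.1]
      · exact mul_nonpos_of_nonneg_of_nonpos (le_of_lt (hb_pos k hk)) hx.2
    have hcc : ∀ x : ℝ, -δ ≤ x → x < 0 →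
        |∑ j ∈ Finset.range M, cc j * x ^ j| ≤ (CB * (1 + N)) * |x| ^ M := by
      intro x hx1 hx2
      have hx : x ∈ Set.Icc (-δ) 0 := ⟨hx1, le_of_lt hx2⟩
      have hfe := heqN x hx
      set P : ℝ → ℝ := fun t => ∑ j ∈ Finset.range M, c j * t ^ j with hPdef
      have hPsum : ∑ j ∈ Finset.range M, cc j * x ^ j
          = P x + ∑ k ∈ Finset.range N, P (b k * x) := by
        rw [hPdef]
        simp only
        rw [Finset.sum_comm (s := Finset.range N) (t := Finset.range M)
          (f := fun k j => c j * (b k * x) ^ j)]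
        rw [← Finset.sum_add_distrib]
        apply Finset.sum_congr rfl
        intro j _
        have hS : ∑ k ∈ Finset.range N, c j * (b k * x) ^ j
            = (∑ k ∈ Finset.range N, b k ^ j) * (c j * x ^ j) := by
          rw [Finset.sum_mul]
          exact Finset.sum_congr rfl fun k _ => by rw [mul_pow]; ring
        rw [hS]
        show c j * (1 + ∑ k ∈ Finset.range N, b k ^ j) * x ^ j = _
        ring
      have hkey : P x + ∑ k ∈ Finset.range N, P (b k * x)
          = (P x - f x) + ∑ k ∈ Finset.range N, (P (b k * x) - f (b k * x))
            + (f x + ∑ k ∈ Finset.range N, f (b k * x)) := by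
        rw [Finset.sum_sub_distrib]
        ring
      rw [hPsum, hkey, hfe, add_zero]
      have hterm : ∀ k ∈ Finset.range N, |P (b k * x) - f (b k * x)| ≤ CB * |x| ^ M := by
        intro k hk
        have hkN : k ≤ N := le_of_lt (Finset.mem_range.mp hk)
        have hmem := hmemb x hx k hkN
        have := hbound (b k * x) hmem
        rw [abs_sub_comm] at this
        refine le_trans this ?_
        apply mul_le_mul_of_nonneg_left _ hCB0
        apply pow_le_pow_left₀ (abs_nonneg _)
        rw [abs_mul, abs_of_pos (hb_pos k hkN)]
        calc b k * |x| ≤ 1 * |x| :=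
              mul_le_mul_of_nonneg_right (hb_le1 k hkN) (abs_nonneg _)
          _ = |x| := one_mul _
      calc |(P x - f x) + ∑ k ∈ Finset.range N, (P (b k * x) - f (b k * x))|
          ≤ |P x - f x| + |∑ k ∈ Finset.range N, (P (b k * x) - f (b k * x))| := abs_add_le _ _
        _ ≤ CB * |x| ^ M + ∑ k ∈ Finset.range N, |P (b k * x) - f (b k * x)| := by
            apply add_le_add
            · rw [abs_sub_comm]; exact hbound x hx
            · exact Finset.abs_sum_le_sum_abs _ _
        _ ≤ CB * |x| ^ M + ∑ k ∈ Finset.range N, CB * |x| ^ M := by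
            apply add_le_add_right
            exact Finset.sum_le_sum hterm
        _ = (CB * (1 + N)) * |x| ^ M := by
            rw [Finset.sum_const, Finset.card_range, nsmul_eq_mul]
            ring
    have hcc0 := aux_poly M cc (CB * (1 + N)) δ hδ hcc
    intro j hj
    have h0 := hcc0 j hj
    rw [hccdef] at h0
    simp only at h0
    rcases mul_eq_zero.mp h0 with h | h
    · exact h
    · exfalso
      have hpos : (0:ℝ) < 1 + ∑ k ∈ Finset.range N, b k ^ j := by
        have : (0:ℝ) ≤ ∑ k ∈ Finset.range N, b k ^ j :=
          Finset.sum_nonneg fun k hk =>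
            pow_nonneg (le_of_lt (hb_pos k (le_of_lt (Finset.mem_range.mp hk)))) j
        linarith
      linarith [hpos, h.symm.le, h.le]
  -- hence |f x| ≤ CB * |x|^M
  have hbound2 : ∀ x ∈ Set.Icc (-δ) 0, |f x| ≤ CB * |x| ^ M := by
    intro x hx
    have := hbound x hx
    have hz : ∑ j ∈ Finset.range M, c j * x ^ j = 0 :=
      Finset.sum_eq_zero fun j hj => by rw [hcz j (Finset.mem_range.mp hj)]; ring
    rwa [hz, sub_zero] at this
  -- contraction
  set q : ℝ := ∑ k ∈ Finset.range N, b k ^ M with hqdef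
  have hq0 : 0 ≤ q :=
    Finset.sum_nonneg fun k hk =>
      pow_nonneg (le_of_lt (hb_pos k (le_of_lt (Finset.mem_range.mp hk)))) M
  have hiter : ∀ p : ℕ, ∀ x ∈ Set.Icc (-δ) 0, |f x| ≤ CB * q ^ p * |x| ^ M := by
    intro p
    induction p with
    | zero => simpa using hbound2
    | succ p ih =>
      intro x hx
      have hfe := heqN x hx
      have hfx : f x = -∑ k ∈ Finset.range N, f (b k * x) := by linarith
      have hmemb : ∀ k, k < N → b k * x ∈ Set.Icc (-δ) 0 := by
        intro k hk
        constructor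
        · have := mul_le_mul_of_nonpos_right (hb_le1 k (le_of_lt hk)) hx.2
          simp only [one_mul] at this
          linarith [hx.1]
        · exact mul_nonpos_of_nonneg_of_nonpos (le_of_lt (hb_pos k (le_of_lt hk))) hx.2
      calc |f x| = |∑ k ∈ Finset.range N, f (b k * x)| := by rw [hfx, abs_neg]
        _ ≤ ∑ k ∈ Finset.range N, |f (b k * x)| := Finset.abs_sum_le_sum_abs _ _
        _ ≤ ∑ k ∈ Finset.range N, CB * q ^ p * (b k ^ M * |x| ^ M) := by
            apply Finset.sum_le_sum
            intro k hk
            have hkN : k < N := Finset.mem_range.mp hk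
            have := ih (b k * x) (hmemb k hkN)
            refine le_trans this (le_of_eq ?_)
            rw [abs_mul, abs_of_pos (hb_pos k (le_of_lt hkN)), mul_pow]
        _ = CB * q ^ (p + 1) * |x| ^ M := by
            have hsum : ∑ k ∈ Finset.range N, CB * q ^ p * (b k ^ M * |x| ^ M)
                = CB * q ^ p * |x| ^ M * ∑ k ∈ Finset.range N, b k ^ M := by
              rw [Finset.mul_sum]
              exact Finset.sum_congr rfl fun k _ => by ring
            rw [hsum, ← hqdef]
            ring
  intro x hx
  have hlim : Filter.Tendsto (fun p : ℕ => CB * |x| ^ M * q ^ p) Filter.atTop (nhds 0) := by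
    have := (tendsto_pow_atTop_nhds_zero_of_lt_one hq0 hq).const_mul (CB * |x| ^ M)
    simpa using this
  have hle : |f x| ≤ 0 := by
    apply ge_of_tendsto' hlim
    intro p
    have := hiter p x hx
    calc |f x| ≤ CB * q ^ p * |x| ^ M := this
      _ = CB * |x| ^ M * q ^ p := by ring
  have : |f x| = 0 := le_antisymm hle (abs_nonneg _)
  exact abs_eq_zero.mp this
end

section
/- Let N ≥ 1, let a_0 = 1 < a_1 < a_2 < ⋯ < a_N be real numbers, and let m(𝐚) be the least natural number m such that ∑_{k=0}^{N-1} (a_k/a_N)^m < 1. If f : ℝ → ℝ is k-times continuously differentiable on ℝ with k ≥ m(𝐚) and satisfies f(x) + f(a_1 x) + ⋯ + f(a_N x) = 0 for all x ∈ ℝ, then f = 0. In particular, f = 0 is the unique C^∞ solution of this equation on the whole real line. -/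
open Finset Set Filter Topology


private lemma idw_eq {f : ℝ → ℝ} {n : ℕ} {K : ℕ} (hf : ContDiff ℝ (K : ℕ∞) f)
    (hn : n ≤ K) {s : Set ℝ} (hs : UniqueDiffOn ℝ s) {x : ℝ} (hx : x ∈ s) :
    iteratedDerivWithin n f s x = iteratedDeriv n f x := by
  have h1 : HasFTaylorSeriesUpToOn (K : ℕ∞) f (ftaylorSeriesWithin ℝ f univ) univ :=
    (hf.contDiffOn).ftaylorSeriesWithin uniqueDiffOn_univ
  have h2 := (h1.mono (subset_univ s)).eq_iteratedFDerivWithin_of_uniqueDiffOn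
    (m := n) (by exact_mod_cast Nat.cast_le.mpr hn) hs hx
  rw [iteratedDerivWithin_eq_iteratedFDerivWithin, iteratedDeriv_eq_iteratedFDeriv, ← h2]
  simp [ftaylorSeriesWithin, iteratedFDerivWithin_univ]

private lemma bound_nonneg {f : ℝ → ℝ} {k n : ℕ} (hmk : n + 1 ≤ k)
    (hf : ContDiff ℝ (k : ℕ∞) f) (hd : ∀ i, i ≤ k → iteratedDeriv i f 0 = 0)
    {r K : ℝ} (hr : 0 < r) (hK : ∀ y ∈ Icc (0:ℝ) r, |iteratedDeriv (n+1) f y| ≤ K) :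
    ∀ t ∈ Icc (0:ℝ) r, |f t| ≤ K / n.factorial * t ^ (n + 1) := by
  intro t ht
  have hud : UniqueDiffOn ℝ (Icc (0:ℝ) r) := uniqueDiffOn_Icc hr
  have hfOn : ContDiffOn ℝ (↑(n + 1)) f (Icc (0:ℝ) r) :=
    (hf.of_le (by exact_mod_cast hmk)).contDiffOn
  have htay : taylorWithinEval f n (Icc (0:ℝ) r) 0 t = 0 := by
    rw [taylor_within_apply]
    apply Finset.sum_eq_zero
    intro i hi
    have hik : i ≤ k := le_trans (Nat.lt_succ_iff.mp (Finset.mem_range.mp hi)) (Nat.le_of_succ_le hmk)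
    rw [idw_eq hf hik hud (left_mem_Icc.mpr hr.le), hd i hik]
    simp
  have hC : ∀ y ∈ Icc (0:ℝ) r, ‖iteratedDerivWithin (n+1) f (Icc (0:ℝ) r) y‖ ≤ K := by
    intro y hy
    rw [Real.norm_eq_abs, idw_eq hf hmk hud hy]
    exact hK y hy
  have := taylor_mean_remainder_bound hr.le hfOn ht hC
  rw [htay, sub_zero, sub_zero, Real.norm_eq_abs] at this
  calc |f t| ≤ K * t ^ (n+1) / n.factorial := this
    _ = K / n.factorial * t ^ (n + 1) := by ring

private lemma taylor_bound {f : ℝ → ℝ} {k m : ℕ} (hm1 : 1 ≤ m) (hmk : m ≤ k)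
    (hf : ContDiff ℝ (k : ℕ∞) f) (hd : ∀ i, i ≤ k → iteratedDeriv i f 0 = 0)
    {r : ℝ} (hr : 0 < r) :
    ∃ C : ℝ, 0 ≤ C ∧ ∀ t : ℝ, |t| ≤ r → |f t| ≤ C * |t| ^ m := by
  obtain ⟨n, rfl⟩ := Nat.exists_eq_add_of_le hm1
  rw [add_comm] at *
  have hcont : ContinuousOn (iteratedDeriv (n+1) f) (Icc (-r) r) :=
    (hf.continuous_iteratedDeriv (n+1) (by exact_mod_cast hmk)).continuousOn
  obtain ⟨K, hK⟩ := (isCompact_Icc).exists_bound_of_continuousOn hcont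
  simp only [Real.norm_eq_abs] at hK
  have hK0 : 0 ≤ K := le_trans (abs_nonneg _) (hK 0 (by constructor <;> linarith))
  refine ⟨K / n.factorial, by positivity, ?_⟩
  intro t htr
  rcases le_or_gt 0 t with h0 | h0
  · have := bound_nonneg hmk hf hd hr
      (fun y hy => hK y ⟨by linarith [hy.1], hy.2⟩) t ⟨h0, (abs_of_nonneg h0 ▸ htr)⟩
    rwa [abs_of_nonneg h0]
  · -- use g x = f (-x)
    set g : ℝ → ℝ := fun x => f (-x) with hg
    have hgc : ContDiff ℝ (k : ℕ∞) g := hf.comp contDiff_neg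
    have hgd : ∀ i, i ≤ k → iteratedDeriv i g 0 = 0 := by
      intro i hik
      rw [hg]
      rw [iteratedDeriv_comp_neg]
      simp [hd i hik]
    have hgK : ∀ y ∈ Icc (0:ℝ) r, |iteratedDeriv (n+1) g y| ≤ K := by
      intro y hy
      rw [hg, iteratedDeriv_comp_neg]
      simp only [smul_eq_mul, abs_mul, abs_pow, abs_neg, abs_one, one_pow, one_mul]
      exact hK (-y) ⟨by linarith [hy.2], by linarith [hy.1]⟩
    have hbt : |t| ≤ r := htr
    have h1 : (0:ℝ) ≤ -t := by linarith
    have := bound_nonneg hmk hgc hgd hr hgK (-t) ⟨h1, by rw [abs_of_neg h0] at htr; exact htr⟩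
    rw [hg] at this
    simp only [neg_neg] at this
    rwa [abs_of_neg h0]



private lemma deriv_zero_of_eq {N : ℕ} {a : ℕ → ℝ} (hpos : ∀ j, j ≤ N → 0 < a j)
    {k : ℕ} {f : ℝ → ℝ} (hf : ContDiff ℝ (k : ℕ∞) f)
    (heq : ∀ x : ℝ, ∑ j ∈ Finset.range (N + 1), f (a j * x) = 0)
    {n : ℕ} (hn : n ≤ k) : iteratedDeriv n f 0 = 0 := by
  have hfn : ContDiff ℝ (n : ℕ∞) f := hf.of_le (by exact_mod_cast hn)
  have hcomp : ∀ j ∈ Finset.range (N + 1), ContDiff ℝ (n : ℕ∞) (fun x => f (a j * x)) :=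
    fun j _ => hfn.comp (contDiff_const.mul contDiff_id)
  have hF : (fun x => ∑ j ∈ Finset.range (N + 1), f (a j * x)) = (fun _ => (0:ℝ)) :=
    funext heq
  have h0 : iteratedDeriv n (fun x => ∑ j ∈ Finset.range (N + 1), f (a j * x)) 0 = 0 := by
    rw [hF]
    have : ∀ m, iteratedDeriv m (fun _ : ℝ => (0:ℝ)) = fun _ => 0 := by
      intro m
      induction m with
      | zero => rfl
      | succ m ih => rw [iteratedDeriv_succ, ih]; funext y; simp
    rw [this]
  have hsum : iteratedDeriv n (fun x => ∑ j ∈ Finset.range (N + 1), f (a j * x)) 0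
      = ∑ j ∈ Finset.range (N + 1), iteratedDeriv n (fun x => f (a j * x)) 0 := by
    rw [iteratedDeriv_eq_iteratedFDeriv]
    rw [iteratedFDeriv_sum (f := fun j x => f (a j * x)) hcomp]
    simp [iteratedDeriv_eq_iteratedFDeriv]
  have hterm : ∀ j ∈ Finset.range (N + 1),
      iteratedDeriv n (fun x => f (a j * x)) 0 = a j ^ n * iteratedDeriv n f 0 := by
    intro j hj
    have := iteratedDeriv_comp_const_mul hfn (a j)
    rw [congrFun this 0]
    norm_num
  rw [hsum, Finset.sum_congr rfl hterm, ← Finset.sum_mul] at h0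
  have hspos : 0 < ∑ j ∈ Finset.range (N + 1), a j ^ n := by
    apply Finset.sum_pos
    · intro j hj
      exact pow_pos (hpos j (Nat.lt_succ_iff.mp (Finset.mem_range.mp hj))) n
    · exact Finset.nonempty_range_iff.mpr (Nat.succ_ne_zero N)
  exact (mul_eq_zero.mp h0).resolve_left (ne_of_gt hspos)

private lemma key_zero (N : ℕ) (hN : 1 ≤ N) (a : ℕ → ℝ) (ha0 : a 0 = 1)
    (hmono : ∀ k, k < N → a k < a (k + 1)) (k : ℕ)
    (hk : sInf {m : ℕ | ∑ j ∈ Finset.range N, (a j / a N) ^ m < 1} ≤ k)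
    (f : ℝ → ℝ) (hf : ContDiff ℝ (k : ℕ∞) f)
    (heq : ∀ x : ℝ, ∑ j ∈ Finset.range (N + 1), f (a j * x) = 0) : f = 0 := by
  have mono : ∀ i j : ℕ, i < j → j ≤ N → a i < a j := by
    intro i j hij hjN
    induction j with
    | zero => omega
    | succ j ih =>
      rcases Nat.lt_succ_iff_lt_or_eq.mp hij with h | h
      · exact lt_trans (ih h (by omega)) (hmono j (by omega))
      · subst h; exact hmono i (by omega)
  have hge1 : ∀ j, j ≤ N → 1 ≤ a j := by
    intro j hj
    rcases Nat.eq_zero_or_pos j with rfl | hj0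
    · exact ha0.ge
    · exact le_of_lt (ha0 ▸ mono 0 j hj0 hj)
  have hpos : ∀ j, j ≤ N → 0 < a j := fun j hj => lt_of_lt_of_le one_pos (hge1 j hj)
  have haN : 0 < a N := hpos N le_rfl
  have hb0 : ∀ j, j < N → 0 < a j / a N := fun j hj => div_pos (hpos j hj.le) haN
  have hb1 : ∀ j, j < N → a j / a N < 1 := fun j hj =>
    (div_lt_one haN).mpr (mono j N hj le_rfl)
  -- the defining set is nonempty
  have hSne : {m : ℕ | ∑ j ∈ Finset.range N, (a j / a N) ^ m < 1}.Nonempty := by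
    set c : ℝ := a (N - 1) / a N with hc
    have hc0 : 0 ≤ c := (hb0 (N-1) (by omega)).le
    have hc1 : c < 1 := hb1 (N-1) (by omega)
    have htend : Tendsto (fun m : ℕ => (N : ℝ) * c ^ m) atTop (𝓝 0) := by
      have := tendsto_pow_atTop_nhds_zero_of_lt_one hc0 hc1
      simpa using this.const_mul (N : ℝ)
    obtain ⟨m, hm⟩ := (htend.eventually_lt_const one_pos).exists
    refine ⟨m, ?_⟩
    have hle : ∑ j ∈ Finset.range N, (a j / a N) ^ m ≤ (N : ℝ) * c ^ m := by
      have h := Finset.sum_le_card_nsmul (Finset.range N)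
        (fun j => (a j / a N) ^ m) (c ^ m) ?_
      · simpa [Finset.card_range, nsmul_eq_mul] using h
      intro j hj
      have hjN := Finset.mem_range.mp hj
      have haj : a j ≤ a (N - 1) := by
        rcases Nat.lt_or_ge j (N-1) with h | h
        · exact (mono j (N-1) h (by omega)).le
        · have : j = N - 1 := by omega
          simp [this]
      exact pow_le_pow_left₀ (hb0 j hjN).le (by rw [hc]; gcongr) m
    exact lt_of_le_of_lt hle hm
  set m₀ : ℕ := sInf {m : ℕ | ∑ j ∈ Finset.range N, (a j / a N) ^ m < 1} with hm₀
  have hm₀S : ∑ j ∈ Finset.range N, (a j / a N) ^ m₀ < 1 := Nat.sInf_mem hSne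
  have hm₀1 : 1 ≤ m₀ := by
    rcases Nat.eq_zero_or_pos m₀ with h | h
    · exfalso
      rw [h] at hm₀S
      simp only [pow_zero, Finset.sum_const, Finset.card_range, nsmul_eq_mul, mul_one] at hm₀S
      exact absurd hm₀S (not_lt.mpr (by exact_mod_cast hN))
    · exact h
  -- derivatives vanish at 0
  have hd : ∀ i, i ≤ k → iteratedDeriv i f 0 = 0 := fun i hi =>
    deriv_zero_of_eq hpos hf heq hi
  -- the scaling identity
  have hscale : ∀ y : ℝ, |f y| ≤ ∑ j ∈ Finset.range N, |f (a j / a N * y)| := by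
    intro y
    have h1 := heq (y / a N)
    rw [Finset.sum_range_succ] at h1
    have h2 : a N * (y / a N) = y := by field_simp
    rw [h2] at h1
    have h3 : f y = -∑ j ∈ Finset.range N, f (a j / a N * y) := by
      have : ∀ j ∈ Finset.range N, f (a j * (y / a N)) = f (a j / a N * y) := by
        intro j _; congr 1; field_simp
      rw [Finset.sum_congr rfl this] at h1
      linarith
    rw [h3, abs_neg]
    exact Finset.abs_sum_le_sum_abs _ _
  -- main estimate
  funext y₀
  show f y₀ = 0
  set r : ℝ := |y₀| + 1 with hr
  have hrpos : 0 < r := by positivity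
  obtain ⟨C, hC0, hC⟩ := taylor_bound hm₀1 hk hf hd hrpos
  set T : ℝ := ∑ j ∈ Finset.range N, (a j / a N) ^ m₀ with hT
  have hT0 : 0 ≤ T := Finset.sum_nonneg fun j hj =>
    pow_nonneg (hb0 j (Finset.mem_range.mp hj)).le _
  have iter : ∀ n : ℕ, ∀ y : ℝ, |y| ≤ r → |f y| ≤ T ^ n * (C * |y| ^ m₀) := by
    intro n
    induction n with
    | zero => intro y hy; simpa using hC y hy
    | succ n ih =>
      intro y hy
      refine le_trans (hscale y) ?_
      have hstep : ∀ j ∈ Finset.range N,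
          |f (a j / a N * y)| ≤ T ^ n * (C * ((a j / a N) ^ m₀ * |y| ^ m₀)) := by
        intro j hj
        have hjN := Finset.mem_range.mp hj
        have habs : |a j / a N * y| = a j / a N * |y| := by
          rw [abs_mul, abs_of_pos (hb0 j hjN)]
        have h1 : |a j / a N * y| ≤ r := by
          rw [habs]
          calc a j / a N * |y| ≤ 1 * |y| := by
                apply mul_le_mul_of_nonneg_right (hb1 j hjN).le (abs_nonneg y)
            _ = |y| := one_mul _
            _ ≤ r := hy
        have := ih _ h1
        rwa [habs, mul_pow] at this
      refine le_trans (Finset.sum_le_sum hstep) ?_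
      have hsum2 : ∑ j ∈ Finset.range N, T ^ n * (C * ((a j / a N) ^ m₀ * |y| ^ m₀))
          = (∑ j ∈ Finset.range N, (a j / a N) ^ m₀) * (T ^ n * C * |y| ^ m₀) := by
        rw [Finset.sum_mul]
        exact Finset.sum_congr rfl (fun j _ => by ring)
      rw [hsum2, ← hT]
      exact le_of_eq (by ring)
  have htendT : Tendsto (fun n : ℕ => T ^ n * (C * |y₀| ^ m₀)) atTop (𝓝 0) := by
    have := tendsto_pow_atTop_nhds_zero_of_lt_one hT0 hm₀S
    simpa using this.mul_const (C * |y₀| ^ m₀)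
  have hle0 : |f y₀| ≤ 0 :=
    ge_of_tendsto' htendT (fun n => iter n y₀ (by rw [hr]; linarith [abs_nonneg y₀]))
  exact abs_eq_zero.mp (le_antisymm hle0 (abs_nonneg _))


/-- If `f : ℝ → ℝ` is `k`-times continuously differentiable with
`k ≥ m(𝐚)` and satisfies the functional equation on all of `ℝ`, then `f = 0`.
In particular `f = 0` is the unique `C^∞` solution on the real line. -/
theorem stmt_2 (N : ℕ) (hN : 1 ≤ N) (a : ℕ → ℝ) (ha0 : a 0 = 1)
    (hmono : ∀ k, k < N → a k < a (k + 1)) (k : ℕ)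
    (hk : sInf {m : ℕ | ∑ j ∈ Finset.range N, (a j / a N) ^ m < 1} ≤ k)
    (f : ℝ → ℝ) (hf : ContDiff ℝ (k : ℕ∞) f)
    (heq : ∀ x : ℝ, ∑ j ∈ Finset.range (N + 1), f (a j * x) = 0) :
    f = 0 ∧
      ∀ g : ℝ → ℝ, ContDiff ℝ (⊤ : ℕ∞) g →
        (∀ x : ℝ, ∑ j ∈ Finset.range (N + 1), g (a j * x) = 0) → g = 0 :=
  ⟨key_zero N hN a ha0 hmono k hk f hf heq,
    fun g hg hgeq => key_zero N hN a ha0 hmono k hk g (hg.of_le (by exact_mod_cast le_top)) hgeq⟩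
end

section
/- Let N ≥ 2 and let α = a + ib be a complex number such that G_N(α) = 1·^α-sum vanishes, i.e. ∑_{k=1}^N k^α = 0 (where k^α = exp(α log k)). Define f̃_α : ℝ → ℝ by f̃_α(x) = Re(|x|^α) = Re(exp(α log|x|)) for x < 0 and f̃_α(x) = 0 for x ≥ 0. Then f̃_α satisfies ∑_{k=1}^N f̃_α(kx) = 0 for all x ∈ ℝ, f̃_α is infinitely differentiable on ℝ \ {0}, and if a = Re(α) > 0 then f̃_α is continuous on ℝ. In particular, the zero function on [0,∞) extends to a solution on ℝ of f(x) + f(2x) + ⋯ + f(Nx) = 0 that does not vanish identically. -/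
/-- If `N ≥ 2` and `α ∈ ℂ` is a zero of `G_N(z) = ∑_{k=1}^N k^z`, then the
function `f̃_α(x) = Re(|x|^α)` for `x < 0`, `f̃_α(x) = 0` for `x ≥ 0`, solves
`∑_{k=1}^N f̃_α(k x) = 0` on `ℝ`, is `C^∞` on `ℝ \ {0}`, is continuous on `ℝ` whenever
`Re α > 0`, and does not vanish identically. -/
theorem stmt_3 (N : ℕ) (hN : 2 ≤ N) (α : ℂ)
    (hα : ∑ k ∈ Finset.Icc 1 N, (k : ℂ) ^ α = 0)
    (f : ℝ → ℝ)
    (hf : f = fun x : ℝ => if x < 0 then (((|x| : ℝ) : ℂ) ^ α).re else 0) :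
    (∀ x : ℝ, ∑ k ∈ Finset.Icc 1 N, f (k * x) = 0) ∧
    ContDiffOn ℝ (⊤ : ℕ∞) f ({(0 : ℝ)}ᶜ) ∧
    (0 < α.re → Continuous f) ∧
    f ≠ 0 := by
  subst hf
  have hsm : ContDiffOn ℝ (⊤ : ℕ∞)
      (fun x : ℝ => if x < 0 then (((|x| : ℝ) : ℂ) ^ α).re else 0) ({(0 : ℝ)}ᶜ) := by
      intro x hx
      have hx0 : x ≠ 0 := hx
      rcases lt_or_gt_of_ne hx0 with hxlt | hxgt
      · -- x < 0
        have hev : (fun y : ℝ => if y < 0 then (((|y| : ℝ) : ℂ) ^ α).re else 0)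
            =ᶠ[nhds x] fun y : ℝ => (Complex.exp (Complex.log ((-y : ℝ) : ℂ) * α)).re := by
          filter_upwards [IsOpen.mem_nhds isOpen_Iio (show x ∈ Set.Iio (0:ℝ) from hxlt)] with y hy
          have hy' : y < 0 := hy
          rw [if_pos hy', abs_of_neg hy', Complex.cpow_def_of_ne_zero]
          simpa using hy'.ne
        have hc : ContDiffAt ℝ (⊤ : ℕ∞) (fun y : ℝ =>
            (Complex.exp (Complex.log ((-y : ℝ) : ℂ) * α)).re) x := by
          have h1 : ContDiffAt ℝ (⊤ : ℕ∞) (fun y : ℝ => ((-y : ℝ) : ℂ)) x :=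
            (Complex.ofRealCLM.contDiff.comp contDiff_neg).contDiffAt
          have h2 : ContDiffAt ℂ (⊤ : ℕ∞) Complex.log ((-x : ℝ) : ℂ) :=
            Complex.contDiffAt_log (by
              refine Complex.mem_slitPlane_iff.mpr (Or.inl ?_)
              simpa using neg_pos.mpr hxlt)
          have h3 : ContDiffAt ℝ (⊤ : ℕ∞) (fun y : ℝ => Complex.log ((-y : ℝ) : ℂ)) x :=
            (h2.restrict_scalars ℝ).comp (g := Complex.log) x h1
          have h4 : ContDiffAt ℝ (⊤ : ℕ∞) (fun y : ℝ => Complex.log ((-y : ℝ) : ℂ) * α) x :=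
            h3.mul contDiffAt_const
          have h5 : ContDiffAt ℝ (⊤ : ℕ∞)
              (fun y : ℝ => Complex.exp (Complex.log ((-y : ℝ) : ℂ) * α)) x :=
            ((Complex.contDiff_exp (𝕜 := ℝ)).contDiffAt).comp x h4
          exact (Complex.reCLM.contDiff.contDiffAt).comp x h5
        exact ((hc.congr_of_eventuallyEq hev).contDiffWithinAt)
      · -- x > 0
        have hev : (fun y : ℝ => if y < 0 then (((|y| : ℝ) : ℂ) ^ α).re else 0)
            =ᶠ[nhds x] fun _ : ℝ => (0:ℝ) := by
          filter_upwards [IsOpen.mem_nhds isOpen_Ioi (show x ∈ Set.Ioi (0:ℝ) from hxgt)] with y hy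
          exact if_neg (not_lt.mpr (le_of_lt hy))
        exact ((contDiffAt_const.congr_of_eventuallyEq hev).contDiffWithinAt)
  refine ⟨?_, hsm, ?_, ?_⟩
  · intro x
    rcases lt_or_ge x 0 with hx | hx
    · have key : ∀ k ∈ Finset.Icc 1 N, (if (k:ℝ) * x < 0 then (((|(k:ℝ)*x| : ℝ) : ℂ) ^ α).re else 0)
          = ((k:ℂ) ^ α * ((|x|:ℝ):ℂ) ^ α).re := by
        intro k hk
        have hk1 : 1 ≤ k := (Finset.mem_Icc.mp hk).1
        have hkpos : (0:ℝ) < (k:ℝ) := by exact_mod_cast hk1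
        have hkx : (k:ℝ) * x < 0 := mul_neg_of_pos_of_neg hkpos hx
        rw [if_pos hkx, abs_mul, abs_of_pos hkpos,
          Complex.ofReal_mul, Complex.mul_cpow_ofReal_nonneg hkpos.le (abs_nonneg x)]
        norm_cast
      rw [Finset.sum_congr rfl key, ← Complex.re_sum, ← Finset.sum_mul, hα, zero_mul,
        Complex.zero_re]
    · apply Finset.sum_eq_zero
      intro k hk
      have hk0 : (0:ℝ) ≤ (k:ℝ) * x := mul_nonneg (Nat.cast_nonneg k) hx
      show (if ((k:ℝ)*x) < 0 then ((((|((k:ℝ)*x)|:ℝ)):ℂ)^α).re else 0) = 0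
      exact if_neg (not_lt.mpr hk0)
  · intro ha
    rw [continuous_iff_continuousAt]
    intro x
    by_cases hx0 : x = 0
    · subst hx0
      have hval : (if (0:ℝ) < 0 then (((|(0:ℝ)|:ℝ):ℂ)^α).re else 0) = 0 := if_neg (lt_irrefl 0)
      unfold ContinuousAt
      rw [show (fun x : ℝ => if x < 0 then (((|x| : ℝ) : ℂ) ^ α).re else 0) 0 = 0 from hval]
      apply squeeze_zero_norm (a := fun y : ℝ => |y| ^ α.re)
      · intro y
        by_cases hy : y < 0
        · simp only [if_pos hy]
          calc ‖(((|y|:ℝ):ℂ)^α).re‖ ≤ ‖(((|y|:ℝ):ℂ)^α)‖ := Complex.abs_re_le_norm _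
          _ = |y| ^ α.re := Complex.norm_cpow_eq_rpow_re_of_pos (abs_pos.mpr hy.ne) α
        · simp only [if_neg hy, norm_zero]
          exact Real.rpow_nonneg (abs_nonneg y) _
      · have h1 : ContinuousAt (fun t : ℝ => t ^ α.re) (0:ℝ) :=
          Real.continuousAt_rpow_const 0 α.re (Or.inr ha.le)
        have h1' : ContinuousAt (fun t : ℝ => t ^ α.re) (|(0:ℝ)|) := by
          rw [abs_zero]; exact h1
        have h2 := h1'.comp (continuous_abs.continuousAt (x := (0:ℝ)))
        simpa [ContinuousAt, Function.comp_def, Real.zero_rpow ha.ne'] using h2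
    · exact hsm.continuousOn.continuousAt (isOpen_compl_singleton.mem_nhds hx0)
  · intro h
    have h1 : (if (-1:ℝ) < 0 then (((|(-1:ℝ)| : ℝ) : ℂ) ^ α).re else 0) = 0 := congrFun h (-1)
    simp [Complex.one_cpow] at h1
end

section
/- Let N ≥ 1 and let 0 < b_1 < b_2 < ⋯ < b_N be real numbers. Suppose g : [0, b_N] → ℝ is continuous and satisfies g(w) + g(w + b_1) + ⋯ + g(w + b_N) = 0 whenever {w, w + b_1, …, w + b_N} ⊆ [0, b_N]. Then there exists a unique continuous function g̃ : ℝ → ℝ such that g̃(w) + g̃(w + b_1) + ⋯ + g̃(w + b_N) = 0 for all w ∈ ℝ and g̃ agrees with g on [0, b_N]. -/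
open Set

noncomputable def stmt7F (N : ℕ) (b : ℕ → ℝ) (g : ℝ → ℝ) : ℕ → ℝ → ℝ
  | 0 => g
  | n + 1 => fun w =>
      if w ≤ b N then g w
      else -(stmt7F N b g n (w - b N) +
        ∑ k ∈ Finset.Icc 1 (N - 1), stmt7F N b g n (w - b N + b k))

noncomputable def stmt7f (N : ℕ) (b : ℕ → ℝ) (g : ℝ → ℝ) (δ : ℝ) (w : ℝ) : ℝ :=
  stmt7F N b g (⌈(w - b N) / δ⌉₊ + 1) w

noncomputable def stmt7G (N : ℕ) (b : ℕ → ℝ) (f : ℝ → ℝ) : ℕ → ℝ → ℝ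
  | 0 => f
  | n + 1 => fun w =>
      if 0 ≤ w then f w else -∑ k ∈ Finset.Icc 1 N, stmt7G N b f n (w + b k)

noncomputable def stmt7gt (N : ℕ) (b : ℕ → ℝ) (f : ℝ → ℝ) (w : ℝ) : ℝ :=
  stmt7G N b f (⌈(-w) / b 1⌉₊ + 1) w

lemma stmt7_contOn_union {f : ℝ → ℝ} {s t : Set ℝ} (hs : IsClosed s) (ht : IsClosed t)
    (h1 : ContinuousOn f s) (h2 : ContinuousOn f t) : ContinuousOn f (s ∪ t) := by
  intro x hx
  rcases hx with hx | hx
  · by_cases hxt : x ∈ t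
    · exact (h1 x hx).union (h2 x hxt)
    · exact (h1 x hx).union
        (continuousWithinAt_of_notMem_closure (by rwa [ht.closure_eq]))
  · by_cases hxs : x ∈ s
    · exact (h1 x hxs).union (h2 x hx)
    · exact (continuousWithinAt_of_notMem_closure
        (by rwa [hs.closure_eq])).union (h2 x hx)

/-- A continuous solution `g` of the equation on `[0, b N]` extends in a
unique way to a continuous solution `g̃` of the equation on all of `ℝ`. -/
theorem stmt_7 (N : ℕ) (hN : 1 ≤ N) (b : ℕ → ℝ) (hb1 : 0 < b 1)
    (hmono : ∀ k, 1 ≤ k → k < N → b k < b (k + 1)) (g : ℝ → ℝ)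
    (hg : ContinuousOn g (Set.Icc 0 (b N)))
    (heq : ∀ w : ℝ,
      (w ∈ Set.Icc 0 (b N) ∧ ∀ k, 1 ≤ k → k ≤ N → w + b k ∈ Set.Icc 0 (b N)) →
      g w + ∑ k ∈ Finset.Icc 1 N, g (w + b k) = 0) :
    ∃! gt : ℝ → ℝ,
      Continuous gt ∧
      (∀ w : ℝ, gt w + ∑ k ∈ Finset.Icc 1 N, gt (w + b k) = 0) ∧
      ∀ x ∈ Set.Icc 0 (b N), gt x = g x := by
  -- basic monotonicity facts
  have bmono : ∀ i j, 1 ≤ i → i ≤ j → j ≤ N → b i ≤ b j := by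
    intro i j hi hij hjN
    obtain ⟨d, rfl⟩ := Nat.exists_eq_add_of_le hij
    clear hij
    induction d with
    | zero => simp
    | succ d ih =>
      have h1 : i + d < N := by omega
      calc b i ≤ b (i + d) := ih (by omega)
        _ ≤ b (i + (d + 1)) := by
          have := hmono (i + d) (by omega) h1; rw [← add_assoc]; linarith
  have bpos : ∀ k, 1 ≤ k → k ≤ N → 0 < b k := fun k hk hkN =>
    lt_of_lt_of_le hb1 (bmono 1 k le_rfl hk hkN)
  have hbN : 0 < b N := bpos N hN le_rfl
  have hb1N : b 1 ≤ b N := bmono 1 N le_rfl hN le_rfl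
  -- the step size δ
  set δ : ℝ := b N - (if N = 1 then 0 else b (N - 1)) with hδdef
  have hδpos : 0 < δ := by
    rw [hδdef]
    by_cases h1 : N = 1
    · simp [h1]; rw [h1] at hbN; linarith [hbN]
    · rw [if_neg h1]
      have : b (N - 1) < b (N - 1 + 1) := hmono (N - 1) (by omega) (by omega)
      have hN1 : N - 1 + 1 = N := by omega
      rw [hN1] at this; linarith
  have hδle : δ ≤ b N := by
    rw [hδdef]
    by_cases h1 : N = 1
    · simp [h1]
    · rw [if_neg h1]
      have := bpos (N - 1) (by omega) (by omega)
      linarith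
  have hkδ : ∀ k, 1 ≤ k → k ≤ N - 1 → b k ≤ b N - δ := by
    intro k hk hkN
    have h1 : N ≠ 1 := by omega
    rw [hδdef, if_neg h1]
    have := bmono k (N - 1) hk hkN (by omega)
    linarith
  -- splitting off the top of the sum
  have sum_split : ∀ φ : ℕ → ℝ,
      ∑ k ∈ Finset.Icc 1 N, φ k = (∑ k ∈ Finset.Icc 1 (N - 1), φ k) + φ N := by
    intro φ
    obtain ⟨M, rfl⟩ : ∃ M, N = M + 1 := ⟨N - 1, by omega⟩
    have hins : Finset.Icc 1 (M + 1) = insert (M + 1) (Finset.Icc 1 M) := by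
      ext x; simp only [Finset.mem_Icc, Finset.mem_insert]; omega
    rw [hins, Finset.sum_insert (by simp [Finset.mem_Icc])]
    simp only [Nat.add_sub_cancel]
    exact add_comm _ _
  -- the basic consistency relation from heq
  have hcons : g (b N) = -(g 0 + ∑ k ∈ Finset.Icc 1 (N - 1), g (b k)) := by
    have h0 := heq 0 ⟨⟨le_rfl, le_of_lt hbN⟩, fun k hk hkN => by
      constructor
      · simp; linarith [bpos k hk hkN]
      · simp; linarith [bmono k N hk hkN le_rfl]⟩
    simp only [zero_add] at h0
    rw [sum_split (fun k => g (b k))] at h0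
    linarith
  -- abbreviations
  set f : ℝ → ℝ := stmt7f N b g δ with hfdef
  -- controlled unfolding of F
  have hFunf : ∀ (n : ℕ) (w : ℝ), stmt7F N b g (n + 1) w =
      if w ≤ b N then g w
      else -(stmt7F N b g n (w - b N) +
        ∑ k ∈ Finset.Icc 1 (N - 1), stmt7F N b g n (w - b N + b k)) := fun n w => rfl
  -- F stability
  have Fstab : ∀ n m : ℕ, n ≤ m → ∀ w : ℝ, w ≤ b N + n * δ →
      stmt7F N b g (n + 1) w = stmt7F N b g (m + 1) w := by
    intro n
    induction n with
    | zero =>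
      intro m _ w hw
      norm_num at hw
      cases m with
      | zero => rfl
      | succ m => rw [hFunf 0 w, hFunf (m + 1) w, if_pos hw, if_pos hw]
    | succ n ih =>
      intro m hm w hw
      obtain ⟨m', rfl⟩ : ∃ m', m = m' + 1 := ⟨m - 1, by omega⟩
      by_cases hwb : w ≤ b N
      · simp only [stmt7F, if_pos hwb]
      · push_neg at hwb
        have hargs : w - b N ≤ b N + n * δ := by
          push_cast at hw ⊢; nlinarith
        rw [hFunf (n + 1) w, hFunf (m' + 1) w, if_neg (not_le.mpr hwb),
          if_neg (not_le.mpr hwb), ih m' (by omega) (w - b N) hargs]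
        congr 2
        apply Finset.sum_congr rfl
        intro k hk
        simp only [Finset.mem_Icc] at hk
        have : w - b N + b k ≤ b N + n * δ := by
          have := hkδ k hk.1 hk.2
          push_cast at hw ⊢; nlinarith
        exact ih m' (by omega) _ this
  have fceil : ∀ w : ℝ, w ≤ b N + (⌈(w - b N) / δ⌉₊ : ℝ) * δ := by
    intro w
    have := Nat.le_ceil ((w - b N) / δ)
    have h2 : (w - b N) / δ * δ = w - b N := div_mul_cancel₀ _ (ne_of_gt hδpos)
    nlinarith [this]
  have fval : ∀ (n : ℕ) (w : ℝ), w ≤ b N + n * δ → f w = stmt7F N b g (n + 1) w := by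
    intro n w hw
    rw [hfdef]
    unfold stmt7f
    rcases le_total (⌈(w - b N) / δ⌉₊) n with h | h
    · exact Fstab _ n h w (by
        calc w ≤ b N + (⌈(w - b N) / δ⌉₊ : ℝ) * δ := fceil w
          _ = _ := rfl)
    · exact (Fstab n _ h w hw).symm
  have f_eq_g : ∀ w : ℝ, w ≤ b N → f w = g w := by
    intro w hw
    rw [fval 0 w (by simpa using by linarith : w ≤ b N + (0:ℕ) * δ)]
    simp only [stmt7F, if_pos hw]
  -- the recursion identity for f on [b N, ∞)
  have f_identity : ∀ w : ℝ, b N ≤ w →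
      f w = -(f (w - b N) + ∑ k ∈ Finset.Icc 1 (N - 1), f (w - b N + b k)) := by
    intro w hw
    rcases eq_or_lt_of_le hw with rfl | hw'
    · rw [f_eq_g (b N) le_rfl, f_eq_g (b N - b N) (by linarith)]
      have : ∀ k ∈ Finset.Icc 1 (N - 1), f (b N - b N + b k) = g (b k) := by
        intro k hk
        simp only [Finset.mem_Icc] at hk
        rw [show b N - b N + b k = b k by ring]
        exact f_eq_g _ (bmono k N hk.1 (by omega) le_rfl)
      rw [Finset.sum_congr rfl this, show b N - b N = (0:ℝ) by ring]
      exact hcons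
    · obtain ⟨c, hc⟩ : ∃ c : ℕ, ⌈(w - b N) / δ⌉₊ = c := ⟨_, rfl⟩
      have hc1 : 1 ≤ c := by
        rw [← hc]
        exact Nat.ceil_pos.mpr (div_pos (by linarith) hδpos)
      have hwc : w ≤ b N + c * δ := by have := fceil w; rwa [hc] at this
      have key : ∀ a : ℝ, a ≤ b N + ((c : ℝ) - 1) * δ → stmt7F N b g c a = f a := by
        intro a ha
        have ha' : a ≤ b N + ((c - 1 : ℕ) : ℝ) * δ := by
          push_cast [Nat.cast_sub hc1] at ha ⊢
          linarith
        rw [fval (c - 1) a ha']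
        congr 1
        omega
      have hunf : f w = -(stmt7F N b g c (w - b N) +
          ∑ k ∈ Finset.Icc 1 (N - 1), stmt7F N b g c (w - b N + b k)) := by
        rw [hfdef]
        unfold stmt7f
        rw [hc]
        obtain ⟨c', rfl⟩ : ∃ c', c = c' + 1 := ⟨c - 1, by omega⟩
        rw [hFunf, if_neg (not_le.mpr hw')]
      rw [hunf, key (w - b N) (by push_cast; nlinarith),
        Finset.sum_congr rfl (fun k hk => by
          simp only [Finset.mem_Icc] at hk
          exact key (w - b N + b k) (by
            have := hkδ k hk.1 hk.2
            push_cast; nlinarith))]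
  -- the functional equation for f on [0, ∞)
  have f_eqn : ∀ w : ℝ, 0 ≤ w → f w + ∑ k ∈ Finset.Icc 1 N, f (w + b k) = 0 := by
    intro w hw
    rw [sum_split (fun k => f (w + b k))]
    have := f_identity (w + b N) (by linarith)
    rw [show w + b N - b N = w by ring] at this
    linarith
  -- continuity of f on growing intervals
  have fcont : ∀ n : ℕ, ContinuousOn f (Icc 0 (b N + n * δ)) := by
    intro n
    induction n with
    | zero =>
      simp only [Nat.cast_zero, zero_mul, add_zero]
      exact hg.congr (fun x hx => f_eq_g x hx.2)
    | succ n ih =>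
      push_cast
      have hδn : (0:ℝ) ≤ (n:ℝ) * δ := by positivity
      have h2 : b N ≤ b N + ((n:ℝ) + 1) * δ := by nlinarith
      rw [← Icc_union_Icc_eq_Icc (le_of_lt hbN) h2]
      apply stmt7_contOn_union isClosed_Icc isClosed_Icc
      · exact hg.congr (fun x hx => f_eq_g x hx.2)
      · have hc1 : ContinuousOn (fun w : ℝ => f (w - b N))
            (Icc (b N) (b N + ((n:ℝ) + 1) * δ)) := by
          refine ih.comp ((continuous_sub_right (b N)).continuousOn) ?_
          intro x hx
          simp only [mem_Icc] at hx ⊢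
          exact ⟨by linarith [hx.1], by linarith [hx.2, hδle]⟩
        have hc2 : ContinuousOn
            (fun w : ℝ => ∑ k ∈ Finset.Icc 1 (N - 1), f (w - b N + b k))
            (Icc (b N) (b N + ((n:ℝ) + 1) * δ)) := by
          apply continuousOn_finset_sum
          intro k hk
          simp only [Finset.mem_Icc] at hk
          have hbk : 0 < b k := bpos k hk.1 (by omega)
          have hbk2 : b k ≤ b N - δ := hkδ k hk.1 hk.2
          refine ih.comp (((continuous_sub_right (b N)).add continuous_const).continuousOn) ?_
          intro x hx
          simp only [mem_Icc] at hx ⊢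
          exact ⟨by linarith [hx.1], by linarith [hx.2]⟩
        exact ((hc1.add hc2).neg).congr (fun x hx => f_identity x hx.1)
  have f_cont_Ici : ContinuousOn f (Ici 0) := by
    intro x hx
    obtain ⟨n, hn⟩ : ∃ n : ℕ, x < b N + n * δ := by
      obtain ⟨n, hn⟩ := exists_nat_gt ((x - b N) / δ)
      exact ⟨n, by have := (div_lt_iff₀ hδpos).mp hn; linarith⟩
    apply ((fcont n) x ⟨hx, le_of_lt hn⟩).mono_of_mem_nhdsWithin
    rw [← Ici_inter_Iic]
    exact inter_mem_nhdsWithin _ (Iic_mem_nhds hn)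
  -- the backward extension
  set gt0 : ℝ → ℝ := stmt7gt N b f with hgt0def
  have hGunf : ∀ (n : ℕ) (w : ℝ), stmt7G N b f (n + 1) w =
      if 0 ≤ w then f w
      else -∑ k ∈ Finset.Icc 1 N, stmt7G N b f n (w + b k) := fun n w => rfl
  have Gstab : ∀ n m : ℕ, n ≤ m → ∀ w : ℝ, -(n * b 1) ≤ w →
      stmt7G N b f (n + 1) w = stmt7G N b f (m + 1) w := by
    intro n
    induction n with
    | zero =>
      intro m _ w hw
      norm_num at hw
      cases m with
      | zero => rfl
      | succ m => rw [hGunf 0 w, hGunf (m + 1) w, if_pos hw, if_pos hw]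
    | succ n ih =>
      intro m hm w hw
      obtain ⟨m', rfl⟩ : ∃ m', m = m' + 1 := ⟨m - 1, by omega⟩
      by_cases hw0 : 0 ≤ w
      · rw [hGunf (n + 1) w, hGunf (m' + 1) w, if_pos hw0, if_pos hw0]
      · rw [hGunf (n + 1) w, hGunf (m' + 1) w, if_neg hw0, if_neg hw0]
        congr 1
        apply Finset.sum_congr rfl
        intro k hk
        simp only [Finset.mem_Icc] at hk
        apply ih m' (by omega)
        have hbk : b 1 ≤ b k := bmono 1 k le_rfl hk.1 hk.2
        push_cast at hw ⊢
        linarith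
  have gceil : ∀ w : ℝ, -((⌈(-w) / b 1⌉₊ : ℝ) * b 1) ≤ w := by
    intro w
    have h1 := Nat.le_ceil ((-w) / b 1)
    have h2 := (div_le_iff₀ hb1).mp h1
    linarith
  have gval : ∀ (n : ℕ) (w : ℝ), -(n * b 1) ≤ w → gt0 w = stmt7G N b f (n + 1) w := by
    intro n w hw
    rw [hgt0def]
    unfold stmt7gt
    rcases le_total (⌈(-w) / b 1⌉₊) n with h | h
    · apply Gstab _ n h w
      exact gceil w
    · exact (Gstab n _ h w hw).symm
  have gt_eq_f : ∀ w : ℝ, 0 ≤ w → gt0 w = f w := by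
    intro w hw
    rw [hgt0def]
    show stmt7G N b f (⌈(-w) / b 1⌉₊ + 1) w = f w
    rw [hGunf, if_pos hw]
  have gt_identity : ∀ w : ℝ, w < 0 →
      gt0 w = -∑ k ∈ Finset.Icc 1 N, gt0 (w + b k) := by
    intro w hw
    obtain ⟨c, hc⟩ : ∃ c : ℕ, ⌈(-w) / b 1⌉₊ = c := ⟨_, rfl⟩
    have hc1 : 1 ≤ c := by
      rw [← hc]
      exact Nat.ceil_pos.mpr (div_pos (by linarith) hb1)
    have hwc : -((c : ℝ) * b 1) ≤ w := by have := gceil w; rwa [hc] at this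
    have key : ∀ a : ℝ, -(((c : ℝ) - 1) * b 1) ≤ a → stmt7G N b f c a = gt0 a := by
      intro a ha
      have ha' : -(((c - 1 : ℕ) : ℝ) * b 1) ≤ a := by
        rw [Nat.cast_sub hc1]; push_cast; push_cast at ha; linarith
      rw [gval (c - 1) a ha']
      congr 1
      omega
    have hunf : gt0 w = -∑ k ∈ Finset.Icc 1 N, stmt7G N b f c (w + b k) := by
      rw [hgt0def]
      show stmt7G N b f (⌈(-w) / b 1⌉₊ + 1) w = _
      rw [hc]
      obtain ⟨c', rfl⟩ : ∃ c', c = c' + 1 := ⟨c - 1, by omega⟩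
      rw [hGunf, if_neg (not_le.mpr hw)]
    rw [hunf]
    congr 1
    apply Finset.sum_congr rfl
    intro k hk
    simp only [Finset.mem_Icc] at hk
    apply key
    have hbk : b 1 ≤ b k := bmono 1 k le_rfl hk.1 hk.2
    linarith
  have gt_eqn : ∀ w : ℝ, gt0 w + ∑ k ∈ Finset.Icc 1 N, gt0 (w + b k) = 0 := by
    intro w
    by_cases hw : 0 ≤ w
    · rw [gt_eq_f w hw, Finset.sum_congr rfl (fun k hk => by
        simp only [Finset.mem_Icc] at hk
        exact gt_eq_f (w + b k) (by linarith [bpos k hk.1 hk.2]))]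
      exact f_eqn w hw
    · rw [gt_identity w (by linarith [lt_of_not_ge hw])]
      ring
  have gt_cont : ∀ n : ℕ, ContinuousOn gt0 (Ici (-(n * b 1))) := by
    intro n
    induction n with
    | zero =>
      simp only [Nat.cast_zero, zero_mul, neg_zero]
      exact f_cont_Ici.congr (fun x hx => gt_eq_f x hx)
    | succ n ih =>
      push_cast
      have hn0 : (0:ℝ) ≤ (n:ℝ) * b 1 := by positivity
      have hle : (-(((n:ℝ) + 1) * b 1) : ℝ) ≤ 0 := by nlinarith
      rw [← Icc_union_Ici_eq_Ici hle]
      apply stmt7_contOn_union isClosed_Icc isClosed_Ici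
      · have hψ : ContinuousOn (fun w => -∑ k ∈ Finset.Icc 1 N, gt0 (w + b k))
            (Icc (-(((n:ℝ) + 1) * b 1)) 0) := by
          apply ContinuousOn.neg
          apply continuousOn_finset_sum
          intro k hk
          simp only [Finset.mem_Icc] at hk
          have hbk : b 1 ≤ b k := bmono 1 k le_rfl hk.1 hk.2
          refine ih.comp ((continuous_add_right (b k)).continuousOn) ?_
          intro x hx
          simp only [mem_Icc, mem_Ici] at hx ⊢
          linarith [hx.1]
        apply ContinuousOn.congr hψ
        intro x _
        show gt0 x = -∑ k ∈ Finset.Icc 1 N, gt0 (x + b k)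
        have := gt_eqn x
        linarith
      · exact f_cont_Ici.congr (fun x hx => gt_eq_f x hx)
  have gt_continuous : Continuous gt0 := by
    rw [continuous_iff_continuousAt]
    intro x
    obtain ⟨n, hn⟩ : ∃ n : ℕ, -(n * b 1) < x := by
      obtain ⟨n, hn⟩ := exists_nat_gt ((-x) / b 1)
      refine ⟨n, ?_⟩
      have := (div_lt_iff₀ hb1).mp hn
      linarith
    exact (gt_cont n).continuousAt (Ici_mem_nhds hn)
  have agree : ∀ x ∈ Icc 0 (b N), gt0 x = g x := fun x hx =>
    (gt_eq_f x hx.1).trans (f_eq_g x hx.2)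
  -- conclusion
  refine ⟨gt0, ⟨gt_continuous, gt_eqn, agree⟩, ?_⟩
  rintro y ⟨-, hyeqn, hyg⟩
  have base : ∀ w ∈ Icc (0:ℝ) (b N), y w = gt0 w := fun w hw =>
    (hyg w hw).trans (agree w hw).symm
  have claimA : ∀ n : ℕ, ∀ w : ℝ, -(n * b 1) ≤ w → w ≤ b N → y w = gt0 w := by
    intro n
    induction n with
    | zero =>
      intro w h1 h2
      norm_num at h1
      exact base w ⟨h1, h2⟩
    | succ n ih =>
      intro w h1 h2
      by_cases h0 : 0 ≤ w
      · exact base w ⟨h0, h2⟩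
      · push_neg at h0
        have e1 := hyeqn w
        have e2 := gt_eqn w
        have hS : ∑ k ∈ Finset.Icc 1 N, y (w + b k)
            = ∑ k ∈ Finset.Icc 1 N, gt0 (w + b k) := by
          apply Finset.sum_congr rfl
          intro k hk
          simp only [Finset.mem_Icc] at hk
          have hbk : b 1 ≤ b k := bmono 1 k le_rfl hk.1 hk.2
          have hbk2 : b k ≤ b N := bmono k N hk.1 hk.2 le_rfl
          apply ih
          · push_cast at h1; linarith
          · linarith
        rw [hS] at e1
        linarith
  have claimB : ∀ n : ℕ, ∀ w : ℝ, 0 ≤ w → w ≤ b N + n * δ → y w = gt0 w := by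
    intro n
    induction n with
    | zero =>
      intro w h1 h2
      norm_num at h2
      exact base w ⟨h1, h2⟩
    | succ n ih =>
      intro w h1 h2
      by_cases h0 : w ≤ b N + n * δ
      · exact ih w h1 h0
      · push_neg at h0
        have hwbN : b N ≤ w := by
          have : (0:ℝ) ≤ (n:ℝ) * δ := by positivity
          linarith
        have e1 := hyeqn (w - b N)
        have e2 := gt_eqn (w - b N)
        rw [sum_split (fun k => y (w - b N + b k))] at e1
        rw [sum_split (fun k => gt0 (w - b N + b k))] at e2
        have hww : w - b N + b N = w := by ring
        rw [hww] at e1 e2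
        have hv : y (w - b N) = gt0 (w - b N) := by
          apply ih
          · linarith
          · push_cast at h2; linarith [hδle]
        have hS : ∑ k ∈ Finset.Icc 1 (N - 1), y (w - b N + b k)
            = ∑ k ∈ Finset.Icc 1 (N - 1), gt0 (w - b N + b k) := by
          apply Finset.sum_congr rfl
          intro k hk
          simp only [Finset.mem_Icc] at hk
          have hbk : 0 < b k := bpos k hk.1 (by omega)
          have hbk2 : b k ≤ b N - δ := hkδ k hk.1 hk.2
          apply ih
          · linarith
          · push_cast at h2; linarith
        rw [hS, hv] at e1
        linarith
  funext w
  rcases le_total w (b N) with hw | hw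
  · obtain ⟨n, hn⟩ : ∃ n : ℕ, -(n * b 1) ≤ w := by
      obtain ⟨n, hn⟩ := exists_nat_gt ((-w) / b 1)
      refine ⟨n, ?_⟩
      have := (div_lt_iff₀ hb1).mp hn
      linarith
    exact claimA n w hn hw
  · obtain ⟨n, hn⟩ : ∃ n : ℕ, w ≤ b N + n * δ := by
      obtain ⟨n, hn⟩ := exists_nat_gt ((w - b N) / δ)
      refine ⟨n, ?_⟩
      have := (div_lt_iff₀ hδpos).mp hn
      linarith
    exact claimB n w (le_trans (le_of_lt hbN) hw) hn
end

section
/- Let N ≥ 1 and let 0 < b_1 < b_2 < ⋯ < b_N be real numbers. Then the set S = { g : ℝ → ℝ : g is continuous and g(w) + g(w + b_1) + ⋯ + g(w + b_N) = 0 for all w ∈ ℝ } is a real vector subspace of C(ℝ) that is infinite dimensional (i.e., it is not a finite-dimensional subspace). -/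
open Finset

noncomputable def solG (N : ℕ) (c : ℕ → ℝ) (u : ℝ → ℝ) : ℕ → ℝ → ℝ
  | 0 => u
  | n + 1 => fun x =>
      if x ≤ 0 then -(∑ k ∈ Finset.Icc 1 N, solG N c u n (x + c k))
      else if x ≤ c N then u x
      else -(∑ k ∈ Finset.range N, solG N c u n (x - c N + c k))

noncomputable def solEps (N : ℕ) (c : ℕ → ℝ) : ℝ := min (c 1) (c N - c (N - 1))

noncomputable def sol (N : ℕ) (c : ℕ → ℝ) (u : ℝ → ℝ) (x : ℝ) : ℝ :=
  solG N c u ⌈(max (-x) (x - c N)) / solEps N c⌉₊ x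

section
variable {N : ℕ} {c : ℕ → ℝ} {u : ℝ → ℝ}

lemma cmono (hc : ∀ k, k < N → c k < c (k + 1)) {j k : ℕ} (hjk : j ≤ k) (hk : k ≤ N) :
    c j ≤ c k := by
  induction k with
  | zero => simp_all
  | succ m ih =>
    rcases Nat.lt_succ_iff_lt_or_eq.mp (Nat.lt_succ_of_le hjk) with h | h
    · exact (ih (Nat.lt_succ_iff.mp h) (by omega)).trans (le_of_lt (hc m (by omega)))
    · exact le_of_eq (by rw [h])

lemma c1pos (hN : 1 ≤ N) (hc0 : c 0 = 0) (hc : ∀ k, k < N → c k < c (k + 1)) : 0 < c 1 := by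
  have := hc 0 (by omega); simpa [hc0] using this

lemma epspos (hN : 1 ≤ N) (hc0 : c 0 = 0) (hc : ∀ k, k < N → c k < c (k + 1)) :
    0 < solEps N c := by
  have h1 := c1pos hN hc0 hc
  have h2 := hc (N - 1) (by omega)
  have he : N - 1 + 1 = N := by omega
  rw [he] at h2
  exact lt_min h1 (by linarith)

lemma eps_le_c1 : solEps N c ≤ c 1 := min_le_left _ _
lemma eps_le_gap : solEps N c ≤ c N - c (N - 1) := min_le_right _ _
end

section
variable {N : ℕ} {c : ℕ → ℝ} {u : ℝ → ℝ}

lemma solG_on (hN : 1 ≤ N) (hc0 : c 0 = 0) (hc : ∀ k, k < N → c k < c (k + 1))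
    (hz : ∀ k, k ≤ N → u (c k) = 0) :
    ∀ n x, 0 ≤ x → x ≤ c N → solG N c u n x = u x := by
  intro n
  induction n with
  | zero => intro x _ _; rfl
  | succ m ih =>
    intro x hx0 hxN
    simp only [solG]
    by_cases h : x ≤ 0
    · have hx : x = 0 := le_antisymm h hx0
      subst hx
      rw [if_pos le_rfl]
      have hterm : ∀ k ∈ Finset.Icc 1 N, solG N c u m (0 + c k) = 0 := by
        intro k hk
        simp only [Finset.mem_Icc] at hk
        have h0k : (0:ℝ) ≤ c k := hc0 ▸ cmono hc (Nat.zero_le k) hk.2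
        have hkN : c k ≤ c N := cmono hc hk.2 le_rfl
        rw [zero_add, ih (c k) h0k hkN, hz k hk.2]
      rw [Finset.sum_congr rfl hterm, Finset.sum_const_zero, neg_zero]
      have := hz 0 (by omega)
      rw [hc0] at this
      exact this.symm
    · rw [if_neg h, if_pos hxN]

lemma solG_cont (hN : 1 ≤ N) (hc0 : c 0 = 0) (hc : ∀ k, k < N → c k < c (k + 1))
    (hu : Continuous u) (hz : ∀ k, k ≤ N → u (c k) = 0) :
    ∀ n, Continuous (solG N c u n) := by
  intro n
  induction n with
  | zero => exact hu
  | succ m ih =>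
    have hcN0 : (0:ℝ) ≤ c N := hc0 ▸ cmono hc (Nat.zero_le N) le_rfl
    have hA : Continuous fun x => -(∑ k ∈ Finset.Icc 1 N, solG N c u m (x + c k)) :=
      (continuous_finset_sum _ fun k _ => ih.comp (continuous_id.add continuous_const)).neg
    have hB : Continuous fun x => -(∑ k ∈ Finset.range N, solG N c u m (x - c N + c k)) :=
      (continuous_finset_sum _ fun k _ =>
        ih.comp ((continuous_id.sub continuous_const).add continuous_const)).neg
    have hval : ∀ k, k ≤ N → solG N c u m (c k) = u (c k) := fun k hk =>
      solG_on hN hc0 hc hz m (c k) (hc0 ▸ cmono hc (Nat.zero_le k) hk) (cmono hc hk le_rfl)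
    have hinner : Continuous fun x => if x ≤ c N then u x else
        -(∑ k ∈ Finset.range N, solG N c u m (x - c N + c k)) := by
      apply Continuous.if_le hu hB continuous_id continuous_const
      intro x hx
      subst hx
      have hterm : ∀ k ∈ Finset.range N, solG N c u m (c N - c N + c k) = 0 := by
        intro k hk
        rw [sub_self, zero_add, hval k (le_of_lt (Finset.mem_range.mp hk)),
          hz k (le_of_lt (Finset.mem_range.mp hk))]
      rw [Finset.sum_congr rfl hterm, Finset.sum_const_zero, neg_zero, hz N le_rfl]
    show Continuous fun x => if x ≤ 0 then _ else _
    apply Continuous.if_le hA hinner continuous_id continuous_const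
    intro x hx
    subst hx
    have hterm : ∀ k ∈ Finset.Icc 1 N, solG N c u m (0 + c k) = 0 := by
      intro k hk
      simp only [Finset.mem_Icc] at hk
      rw [zero_add, hval k hk.2, hz k hk.2]
    rw [Finset.sum_congr rfl hterm, Finset.sum_const_zero, neg_zero, if_pos hcN0]
    have := hz 0 (by omega)
    rw [hc0] at this
    exact this.symm
end

section
variable {N : ℕ} {c : ℕ → ℝ} {u : ℝ → ℝ}

lemma solG_stab (hN : 1 ≤ N) (hc0 : c 0 = 0) (hc : ∀ k, k < N → c k < c (k + 1))
    (hz : ∀ k, k ≤ N → u (c k) = 0) :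
    ∀ (n : ℕ) (x : ℝ), max (-x) (x - c N) ≤ n * solEps N c →
      solG N c u (n + 1) x = solG N c u n x := by
  have heps := epspos hN hc0 hc
  intro n
  induction n with
  | zero =>
    intro x hx
    rw [Nat.cast_zero, zero_mul] at hx
    have hx0 : 0 ≤ x := by have := le_trans (le_max_left _ _) hx; linarith
    have hxN : x ≤ c N := by have := le_trans (le_max_right _ _) hx; linarith
    rw [solG_on hN hc0 hc hz 1 x hx0 hxN, solG_on hN hc0 hc hz 0 x hx0 hxN]
  | succ m ih =>
    intro x hx
    by_cases hx0 : x ≤ 0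
    · simp only [solG]
      rw [if_pos hx0, if_pos hx0]
      congr 1
      apply Finset.sum_congr rfl
      intro k hk
      simp only [Finset.mem_Icc] at hk
      apply ih
      have h1 : -x ≤ (m + 1 : ℕ) * solEps N c := le_trans (le_max_left _ _) hx
      have hck1 : c 1 ≤ c k := cmono hc hk.1 hk.2
      have hckN : c k ≤ c N := cmono hc hk.2 le_rfl
      have he1 : solEps N c ≤ c 1 := min_le_left _ _
      have hm0 : (0:ℝ) ≤ (m : ℕ) * solEps N c :=
        mul_nonneg (Nat.cast_nonneg m) (le_of_lt heps)
      apply max_le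
      · push_cast at h1 ⊢
        nlinarith
      · linarith
    · by_cases hxN : x ≤ c N
      · simp only [solG]
        rw [if_neg hx0, if_pos hxN, if_neg hx0, if_pos hxN]
      · simp only [solG]
        rw [if_neg hx0, if_neg hxN, if_neg hx0, if_neg hxN]
        congr 1
        apply Finset.sum_congr rfl
        intro k hk
        have hkN : k < N := Finset.mem_range.mp hk
        apply ih
        have h1 : x - c N ≤ (m + 1 : ℕ) * solEps N c := le_trans (le_max_right _ _) hx
        have hck : c k ≤ c (N - 1) := cmono hc (by omega) (by omega)
        have hck0 : (0:ℝ) ≤ c k := hc0 ▸ cmono hc (Nat.zero_le k) (le_of_lt hkN)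
        have he2 : solEps N c ≤ c N - c (N - 1) := min_le_right _ _
        have hm0 : (0:ℝ) ≤ (m : ℕ) * solEps N c :=
          mul_nonneg (Nat.cast_nonneg m) (le_of_lt heps)
        apply max_le
        · push_cast at h1 ⊢
          nlinarith
        · push_cast at h1 ⊢
          nlinarith

lemma solG_stab' (hN : 1 ≤ N) (hc0 : c 0 = 0) (hc : ∀ k, k < N → c k < c (k + 1))
    (hz : ∀ k, k ≤ N → u (c k) = 0) :
    ∀ (n m : ℕ) (x : ℝ), n ≤ m → max (-x) (x - c N) ≤ n * solEps N c →
      solG N c u m x = solG N c u n x := by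
  intro n m x hnm hd
  induction m, hnm using Nat.le_induction with
  | base => rfl
  | succ p hp ihp =>
    have heps := epspos hN hc0 hc
    rw [solG_stab hN hc0 hc hz p x (hd.trans (by
      have : (n:ℝ) ≤ (p:ℝ) := Nat.cast_le.mpr hp
      nlinarith)), ihp]

lemma sol_eq (hN : 1 ≤ N) (hc0 : c 0 = 0) (hc : ∀ k, k < N → c k < c (k + 1))
    (hz : ∀ k, k ≤ N → u (c k) = 0) :
    ∀ (n : ℕ) (x : ℝ), max (-x) (x - c N) ≤ n * solEps N c → sol N c u x = solG N c u n x := by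
  intro n x hd
  have heps := epspos hN hc0 hc
  set p := ⌈(max (-x) (x - c N)) / solEps N c⌉₊ with hp
  have hdp : max (-x) (x - c N) ≤ p * solEps N c := by
    rw [← div_le_iff₀ heps]
    exact Nat.le_ceil _
  have h1 : solG N c u (max n p) x = solG N c u p x :=
    solG_stab' hN hc0 hc hz p (max n p) x (le_max_right _ _) hdp
  have h2 : solG N c u (max n p) x = solG N c u n x :=
    solG_stab' hN hc0 hc hz n (max n p) x (le_max_left _ _) hd
  rw [sol, ← hp, ← h1, h2]

lemma sol_cont (hN : 1 ≤ N) (hc0 : c 0 = 0) (hc : ∀ k, k < N → c k < c (k + 1))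
    (hu : Continuous u) (hz : ∀ k, k ≤ N → u (c k) = 0) :
    Continuous (sol N c u) := by
  have heps := epspos hN hc0 hc
  rw [continuous_iff_continuousAt]
  intro x₀
  obtain ⟨n, hn⟩ := exists_nat_gt ((max (-x₀) (x₀ - c N)) / solEps N c)
  have hn' : max (-x₀) (x₀ - c N) < n * solEps N c := by
    rw [div_lt_iff₀ heps] at hn
    linarith
  have hU : IsOpen {x : ℝ | max (-x) (x - c N) < n * solEps N c} :=
    isOpen_lt (Continuous.max continuous_neg (continuous_id.sub continuous_const))
      continuous_const
  apply ContinuousAt.congr ((solG_cont hN hc0 hc hu hz n).continuousAt)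
  exact Filter.eventuallyEq_of_mem (hU.mem_nhds hn')
    (fun x hx => (sol_eq hN hc0 hc hz n x (le_of_lt hx)).symm)
end

section
variable {N : ℕ} {c : ℕ → ℝ} {u : ℝ → ℝ}

lemma sol_restrict (hN : 1 ≤ N) (hc0 : c 0 = 0) (hc : ∀ k, k < N → c k < c (k + 1))
    (hz : ∀ k, k ≤ N → u (c k) = 0) :
    ∀ x : ℝ, 0 ≤ x → x ≤ c N → sol N c u x = u x := by
  intro x hx0 hxN
  rw [sol_eq hN hc0 hc hz 0 x (by rw [Nat.cast_zero, zero_mul]; exact max_le (by linarith) (by linarith))]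
  rfl

lemma sol_eqn (hN : 1 ≤ N) (hc0 : c 0 = 0) (hc : ∀ k, k < N → c k < c (k + 1))
    (hz : ∀ k, k ≤ N → u (c k) = 0) :
    ∀ w : ℝ, sol N c u w + ∑ k ∈ Finset.Icc 1 N, sol N c u (w + c k) = 0 := by
  have heps := epspos hN hc0 hc
  intro w
  by_cases hw : w ≤ 0
  · set n := ⌈(max (-w) (w - c N)) / solEps N c⌉₊ with hn
    have hdn : max (-w) (w - c N) ≤ n * solEps N c := by
      rw [← div_le_iff₀ heps]; exact Nat.le_ceil _
    have hm0 : (0:ℝ) ≤ (n:ℕ) * solEps N c := mul_nonneg (Nat.cast_nonneg n) heps.le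
    have e1 : sol N c u w = solG N c u (n + 1) w :=
      sol_eq hN hc0 hc hz (n + 1) w (hdn.trans (by push_cast; nlinarith))
    have e2 : solG N c u (n + 1) w
        = -(∑ k ∈ Finset.Icc 1 N, solG N c u n (w + c k)) := by
      simp only [solG]; rw [if_pos hw]
    have e3 : ∀ k ∈ Finset.Icc 1 N, solG N c u n (w + c k) = sol N c u (w + c k) := by
      intro k hk
      simp only [Finset.mem_Icc] at hk
      refine (sol_eq hN hc0 hc hz n (w + c k) ?_).symm
      have hck1 : c 1 ≤ c k := cmono hc hk.1 hk.2
      have hckN : c k ≤ c N := cmono hc hk.2 le_rfl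
      have hw1 : -w ≤ max (-w) (w - c N) := le_max_left _ _
      have he1 : solEps N c ≤ c 1 := min_le_left _ _
      apply max_le
      · linarith [hdn, hw1]
      · linarith
    rw [e1, e2, Finset.sum_congr rfl e3]
    ring
  · push_neg at hw
    have hcN0 : (0:ℝ) < c N := lt_of_lt_of_le (c1pos hN hc0 hc) (cmono hc hN le_rfl)
    set x := w + c N with hxdef
    have hx0 : ¬ x ≤ 0 := by simp only [hxdef]; push_neg; linarith
    have hxN : ¬ x ≤ c N := by simp only [hxdef]; push_neg; linarith
    have hdx : max (-x) (x - c N) = w := by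
      have h1 : -x ≤ x - c N := by simp only [hxdef]; linarith
      rw [max_eq_right h1, hxdef]; ring
    set n := ⌈w / solEps N c⌉₊ with hn
    have hdn : w ≤ n * solEps N c := by
      rw [← div_le_iff₀ heps]; exact Nat.le_ceil _
    have hm0 : (0:ℝ) ≤ (n:ℕ) * solEps N c := mul_nonneg (Nat.cast_nonneg n) heps.le
    have e1 : sol N c u x = solG N c u (n + 1) x := by
      apply sol_eq hN hc0 hc hz (n + 1) x
      rw [hdx]; push_cast; nlinarith
    have e2 : solG N c u (n + 1) x
        = -(∑ k ∈ Finset.range N, solG N c u n (x - c N + c k)) := by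
      simp only [solG]; rw [if_neg hx0, if_neg hxN]
    have e3 : ∀ k ∈ Finset.range N, solG N c u n (x - c N + c k) = sol N c u (w + c k) := by
      intro k hk
      have hkN : k < N := Finset.mem_range.mp hk
      have harg : x - c N + c k = w + c k := by rw [hxdef]; ring
      rw [harg]
      refine (sol_eq hN hc0 hc hz n (w + c k) ?_).symm
      have hck : c k ≤ c (N - 1) := cmono hc (by omega) (by omega)
      have hck0 : (0:ℝ) ≤ c k := hc0 ▸ cmono hc (Nat.zero_le k) hkN.le
      have he2 : solEps N c ≤ c N - c (N - 1) := min_le_right _ _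
      apply max_le
      · linarith
      · linarith
    have key : sol N c u (w + c N) = -(∑ k ∈ Finset.range N, sol N c u (w + c k)) := by
      rw [← hxdef] at *
      rw [e1, e2, Finset.sum_congr rfl e3] at *
    -- now combine the sums
    have hsplit : ∑ k ∈ Finset.Icc 0 N, sol N c u (w + c k)
        = sol N c u (w + c 0) + ∑ k ∈ Finset.Icc 1 N, sol N c u (w + c k) := by
      rw [← Finset.Ioc_insert_left (Nat.zero_le N), Finset.sum_insert (by simp),
        ← Finset.Icc_add_one_left_eq_Ioc, zero_add]
    have hsplit2 : ∑ k ∈ Finset.Icc 0 N, sol N c u (w + c k)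
        = ∑ k ∈ Finset.range N, sol N c u (w + c k) + sol N c u (w + c N) := by
      rw [← Finset.Ico_add_one_right_eq_Icc, Finset.sum_Ico_succ_top (Nat.zero_le N),
        Nat.Ico_zero_eq_range]
    have h0 : sol N c u (w + c 0) = sol N c u w := by rw [hc0, add_zero]
    rw [← h0]
    have := hsplit.symm.trans hsplit2
    rw [key] at this
    linarith [this]
end

/-- The set of continuous solutions `g : ℝ → ℝ` of
`g w + ∑_{k=1}^N g (w + b k) = 0` is a vector subspace of `C(ℝ)` that is infinite
dimensional (it is not a finite-dimensional space). -/
theorem stmt_8 (N : ℕ) (hN : 1 ≤ N) (b : ℕ → ℝ) (hb1 : 0 < b 1)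
    (hmono : ∀ k, 1 ≤ k → k < N → b k < b (k + 1)) :
    ∃ S : Submodule ℝ C(ℝ, ℝ),
      (∀ g : C(ℝ, ℝ), g ∈ S ↔ ∀ w : ℝ, g w + ∑ k ∈ Finset.Icc 1 N, g (w + b k) = 0) ∧
      ¬ Module.Finite ℝ S := by
  classical
  set c : ℕ → ℝ := fun k => if k = 0 then 0 else b k with hcdef
  have hc0 : c 0 = 0 := by simp [hcdef]
  have hc : ∀ k, k < N → c k < c (k + 1) := by
    intro k hk
    rcases Nat.eq_zero_or_pos k with h | h
    · subst h; simpa [hcdef] using hb1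
    · have : 1 ≤ k := h
      simp only [hcdef, if_neg (by omega : k ≠ 0), if_neg (by omega : k + 1 ≠ 0)]
      exact hmono k this hk
  have hcb : ∀ k ∈ Finset.Icc 1 N, c k = b k := by
    intro k hk
    simp only [Finset.mem_Icc] at hk
    simp only [hcdef]
    rw [if_neg (by omega : k ≠ 0)]
  have hcN0 : (0:ℝ) < c N := lt_of_lt_of_le (c1pos hN hc0 hc) (cmono hc hN le_rfl)
  let S : Submodule ℝ C(ℝ, ℝ) := {
    carrier := {g : C(ℝ, ℝ) | ∀ w : ℝ, g w + ∑ k ∈ Finset.Icc 1 N, g (w + b k) = 0}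
    add_mem' := by
      intro g h hg hh
      intro w
      have h1 := hg w
      have h2 := hh w
      simp only [ContinuousMap.add_apply, Finset.sum_add_distrib]
      linarith
    zero_mem' := by intro w; simp
    smul_mem' := by
      intro r g hg w
      have h1 := hg w
      simp only [ContinuousMap.smul_apply, smul_eq_mul, ← Finset.mul_sum]
      calc r * g w + r * ∑ k ∈ Finset.Icc 1 N, g (w + b k)
          = r * (g w + ∑ k ∈ Finset.Icc 1 N, g (w + b k)) := by ring
        _ = 0 := by rw [h1, mul_zero] }
  refine ⟨S, fun g => Iff.rfl, ?_⟩
  intro hfin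
  -- the data functions
  set u : ℕ → ℝ → ℝ := fun j x => (∏ k ∈ Finset.Icc 0 N, (x - c k)) * x ^ j with hudef
  have hu : ∀ j, Continuous (u j) := by
    intro j
    exact (continuous_finset_prod _ fun k _ => continuous_id.sub continuous_const).mul
      (continuous_pow j)
  have hz : ∀ j, ∀ k, k ≤ N → u j (c k) = 0 := by
    intro j k hk
    simp only [hudef]
    rw [Finset.prod_eq_zero (Finset.mem_Icc.mpr ⟨Nat.zero_le k, hk⟩) (sub_self (c k)), zero_mul]
  set v : ℕ → C(ℝ, ℝ) := fun j => ⟨sol N c (u j), sol_cont hN hc0 hc (hu j) (hz j)⟩ with hvdef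
  have hvmem : ∀ j, ∀ w : ℝ, v j w + ∑ k ∈ Finset.Icc 1 N, v j (w + b k) = 0 := by
    intro j w
    have := sol_eqn hN hc0 hc (hz j) w
    have hsum : ∑ k ∈ Finset.Icc 1 N, sol N c (u j) (w + b k)
        = ∑ k ∈ Finset.Icc 1 N, sol N c (u j) (w + c k) :=
      Finset.sum_congr rfl fun k hk => by rw [hcb k hk]
    simp only [hvdef, ContinuousMap.coe_mk]
    rw [hsum]
    exact this
  have li : LinearIndependent ℝ (fun j => (⟨v j, hvmem j⟩ : S)) := by
    rw [linearIndependent_iff']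
    intro s a hsum i hi
    have hsumC : ∑ j ∈ s, a j • v j = 0 := by
      have h := congrArg S.subtype hsum
      rw [map_sum, map_zero] at h
      simpa using h
    have hpt : ∀ x : ℝ, ∑ j ∈ s, a j * sol N c (u j) x = 0 := by
      intro x
      have h := ContinuousMap.congr_fun hsumC x
      simpa [hvdef] using h
    set q : Polynomial ℝ := (∏ k ∈ Finset.Icc 0 N, (Polynomial.X - Polynomial.C (c k))) *
      (∑ j ∈ s, Polynomial.C (a j) * Polynomial.X ^ j) with hqdef
    have hqeval : ∀ x : ℝ, Polynomial.eval x q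
        = (∏ k ∈ Finset.Icc 0 N, (x - c k)) * (∑ j ∈ s, a j * x ^ j) := by
      intro x
      simp [hqdef, Polynomial.eval_prod, Polynomial.eval_finset_sum]
    have hroots : Set.Icc (0:ℝ) (c N) ⊆ {x | q.IsRoot x} := by
      intro x hx
      have hx' := hpt x
      have hre : ∀ j ∈ s, a j * sol N c (u j) x = a j * u j x := by
        intro j _
        rw [sol_restrict hN hc0 hc (hz j) x hx.1 hx.2]
      rw [Finset.sum_congr rfl hre] at hx'
      show Polynomial.eval x q = 0
      rw [hqeval, Finset.mul_sum]
      rw [hudef] at hx'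
      simp only at hx'
      rw [← hx']
      apply Finset.sum_congr rfl
      intro j _
      ring
    have hq0 : q = 0 := Polynomial.eq_zero_of_infinite_isRoot q
      ((Set.Icc_infinite hcN0).mono hroots)
    have hprodne : (∏ k ∈ Finset.Icc 0 N, (Polynomial.X - Polynomial.C (c k))) ≠ 0 :=
      (Polynomial.monic_prod_of_monic _ _ fun k _ => Polynomial.monic_X_sub_C (c k)).ne_zero
    have hsum0 : (∑ j ∈ s, Polynomial.C (a j) * Polynomial.X ^ j) = 0 := by
      rcases mul_eq_zero.mp (hqdef ▸ hq0) with h | h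
      · exact absurd h hprodne
      · exact h
    have := congrArg (fun p => Polynomial.coeff p i) hsum0
    simp only [Polynomial.finset_sum_coeff, Polynomial.coeff_C_mul, Polynomial.coeff_X_pow,
      Polynomial.coeff_zero, mul_ite, mul_one, mul_zero] at this
    rwa [Finset.sum_ite_eq s i a, if_pos hi] at this
  haveI := hfin
  exact Module.Finite.not_linearIndependent_of_infinite _ li
end

section
/- Let N ≥ 1 and let 1 = a_0 < a_1 < a_2 < ⋯ < a_N be real numbers. Then the set of continuous functions f : (0,∞) → ℝ satisfying f(x) + f(a_1 x) + ⋯ + f(a_N x) = 0 for all x ∈ (0,∞) is a real vector subspace of C((0,∞)) that is infinite dimensional (i.e., it is not a finite-dimensional subspace). -/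
set_option linter.unusedSectionVars false
namespace Stmt9

/-- Iterative approximations to the solution extending `h`. -/
noncomputable def G (N : ℕ) (c : ℕ → ℝ) (h : ℝ → ℝ) : ℕ → ℝ → ℝ
  | 0 => h
  | (n+1) => fun t =>
      if 0 ≤ t then
        (if t ≤ c N then h t
         else -∑ k ∈ Finset.range N, G N c h n (t - c N + c k))
      else -∑ k ∈ Finset.range N, G N c h n (t + c (k+1))

/-- Measure of how far `t` is from the fundamental domain `[0, c N]`. -/
noncomputable def m (N : ℕ) (c : ℕ → ℝ) (t : ℝ) : ℕ :=
  ⌈(t - c N) / (c N - c (N-1))⌉₊ + ⌈(-t) / c 1⌉₊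

noncomputable def sol (N : ℕ) (c : ℕ → ℝ) (h : ℝ → ℝ) (t : ℝ) : ℝ :=
  G N c h (m N c t) t

section

variable {N : ℕ} {c : ℕ → ℝ}

lemma ceil_pred_lt {x : ℝ} (hx : 0 < x) : ⌈x - 1⌉₊ < ⌈x⌉₊ := by
  have h1 : 1 ≤ ⌈x⌉₊ := Nat.one_le_ceil_iff.mpr hx
  have h2 : ⌈x - 1⌉₊ ≤ ⌈x⌉₊ - 1 := by
    rw [Nat.ceil_le]
    have : ((⌈x⌉₊ - 1 : ℕ) : ℝ) = (⌈x⌉₊ : ℝ) - 1 := by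
      push_cast [Nat.cast_sub h1]; ring
    rw [this]
    linarith [Nat.le_ceil x]
  omega

variable (hN : 1 ≤ N) (hc0 : c 0 = 0) (hstep : ∀ k, k < N → c k < c (k+1))

include hstep in

lemma cmono : ∀ i j, i ≤ j → j ≤ N → c i ≤ c j := by
  intro i j hij hjN
  induction j with
  | zero => simp_all
  | succ j ih =>
    rcases Nat.eq_or_lt_of_le hij with rfl | hij'
    · exact le_refl _
    · exact le_trans (ih (Nat.lt_succ_iff.mp hij') (by omega)) (le_of_lt (hstep j (by omega)))

include hN hc0 hstep

lemma c1pos : 0 < c 1 := by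
  have := hstep 0 (by omega); rw [hc0] at this; exact this

lemma dpos : 0 < c N - c (N-1) := by
  have := hstep (N-1) (by omega)
  rw [Nat.sub_add_cancel hN] at this; linarith

lemma ck_nonneg {k : ℕ} (hk : k ≤ N) : 0 ≤ c k := by
  have := cmono hstep 0 k (by omega) hk; rw [hc0] at this; exact this

lemma ck_le {k : ℕ} (hk : k ≤ N) : c k ≤ c N := cmono hstep k N hk le_rfl

lemma c1_le {k : ℕ} (h1 : 1 ≤ k) (hk : k ≤ N) : c 1 ≤ c k := cmono hstep 1 k h1 hk

lemma cNpos : 0 < c N := lt_of_lt_of_le (c1pos hN hc0 hstep) (c1_le hN hc0 hstep hN le_rfl)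

lemma m_eq_zero_iff {t : ℝ} : m N c t = 0 ↔ 0 ≤ t ∧ t ≤ c N := by
  have hd := dpos hN hc0 hstep
  have hg := c1pos hN hc0 hstep
  rw [m, Nat.add_eq_zero, Nat.ceil_eq_zero, Nat.ceil_eq_zero,
    div_nonpos_iff, div_nonpos_iff]
  constructor
  · rintro ⟨h1 | h1, h2 | h2⟩ <;> constructor <;> linarith [h1.1, h1.2, h2.1, h2.2]
  · rintro ⟨h1, h2⟩
    exact ⟨Or.inr ⟨by linarith, by linarith⟩, Or.inr ⟨by linarith, by linarith⟩⟩

lemma m_fwd {t : ℝ} {k : ℕ} (hk : k < N) (ht : c N < t) :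
    m N c (t - c N + c k) < m N c t := by
  have hd := dpos hN hc0 hstep
  have hg := c1pos hN hc0 hstep
  have hkN : c k ≤ c (N - 1) := cmono hstep k (N-1) (by omega) (by omega)
  have hk0 : 0 ≤ c k := ck_nonneg hN hc0 hstep (le_of_lt hk)
  have ht' : 0 < t - c N + c k := by linarith
  have hm2 : ⌈(-(t - c N + c k)) / c 1⌉₊ = 0 := by
    rw [Nat.ceil_eq_zero]
    apply div_nonpos_of_nonpos_of_nonneg <;> linarith
  have hm2' : ⌈(-t) / c 1⌉₊ = 0 := by
    rw [Nat.ceil_eq_zero]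
    apply div_nonpos_of_nonpos_of_nonneg <;> nlinarith [cNpos hN hc0 hstep]
  rw [m, m, hm2, hm2', Nat.add_zero, Nat.add_zero]
  calc ⌈(t - c N + c k - c N) / (c N - c (N-1))⌉₊
      ≤ ⌈(t - c N) / (c N - c (N-1)) - 1⌉₊ := by
        apply Nat.ceil_le_ceil
        rw [le_sub_iff_add_le, div_add' _ _ _ (ne_of_gt hd), div_le_div_iff_of_pos_right hd]
        linarith
    _ < ⌈(t - c N) / (c N - c (N-1))⌉₊ :=
        ceil_pred_lt (div_pos (by linarith) hd)

lemma m_bwd {t : ℝ} {k : ℕ} (hk : k < N) (ht : t < 0) :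
    m N c (t + c (k+1)) < m N c t := by
  have hd := dpos hN hc0 hstep
  have hg := c1pos hN hc0 hstep
  have hc1k : c 1 ≤ c (k+1) := c1_le hN hc0 hstep (by omega) (by omega)
  have hckN : c (k+1) ≤ c N := ck_le hN hc0 hstep (by omega)
  have hm1 : ⌈(t + c (k+1) - c N) / (c N - c (N-1))⌉₊ = 0 := by
    rw [Nat.ceil_eq_zero]
    apply div_nonpos_of_nonpos_of_nonneg <;> linarith
  have hm1' : ⌈(t - c N) / (c N - c (N-1))⌉₊ = 0 := by
    rw [Nat.ceil_eq_zero]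
    apply div_nonpos_of_nonpos_of_nonneg <;> linarith [cNpos hN hc0 hstep]
  rw [m, m, hm1, hm1', Nat.zero_add, Nat.zero_add]
  calc ⌈(-(t + c (k+1))) / c 1⌉₊
      ≤ ⌈(-t) / c 1 - 1⌉₊ := by
        apply Nat.ceil_le_ceil
        rw [le_sub_iff_add_le, div_add' _ _ _ (ne_of_gt hg), div_le_div_iff_of_pos_right hg]
        linarith
    _ < ⌈(-t) / c 1⌉₊ := ceil_pred_lt (div_pos (by linarith) hg)

variable (h : ℝ → ℝ)

lemma stab : ∀ n t, m N c t ≤ n → G N c h (n+1) t = G N c h n t := by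
  intro n
  induction n with
  | zero =>
    intro t hmt
    obtain ⟨h1, h2⟩ := (m_eq_zero_iff hN hc0 hstep).mp (Nat.le_zero.mp hmt)
    simp only [G, if_pos h1, if_pos h2]
  | succ n ih =>
    intro t hmt
    by_cases h1 : 0 ≤ t
    · by_cases h2 : t ≤ c N
      · simp only [G, if_pos h1, if_pos h2]
      · simp only [G, if_pos h1, if_neg h2, neg_inj]
        apply Finset.sum_congr rfl
        intro k hk
        apply ih
        have := m_fwd hN hc0 hstep (Finset.mem_range.mp hk) (lt_of_not_ge h2)
        omega
    · simp only [G, if_neg h1, neg_inj]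
      apply Finset.sum_congr rfl
      intro k hk
      apply ih
      have := m_bwd hN hc0 hstep (Finset.mem_range.mp hk) (lt_of_not_ge h1)
      omega

lemma eval : ∀ n t, m N c t ≤ n → G N c h n t = sol N c h t := by
  have key : ∀ d t, G N c h (m N c t + d) t = G N c h (m N c t) t := by
    intro d
    induction d with
    | zero => intro t; rfl
    | succ d ih =>
      intro t
      rw [show m N c t + (d+1) = (m N c t + d) + 1 by omega,
        stab hN hc0 hstep h (m N c t + d) t (by omega), ih]
  intro n t hmt
  obtain ⟨d, rfl⟩ := Nat.exists_eq_add_of_le hmt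
  exact key d t

lemma sol_mid {t : ℝ} (h1 : 0 ≤ t) (h2 : t ≤ c N) : sol N c h t = h t := by
  rw [sol, (m_eq_zero_iff hN hc0 hstep).mpr ⟨h1, h2⟩]; rfl

lemma sol_fwd {t : ℝ} (ht : c N < t) :
    sol N c h t = -∑ k ∈ Finset.range N, sol N c h (t - c N + c k) := by
  have h1 : 0 ≤ t := le_of_lt (lt_trans (cNpos hN hc0 hstep) ht)
  have hm : 1 ≤ m N c t := by
    by_contra hcon
    obtain ⟨-, h2⟩ := (m_eq_zero_iff hN hc0 hstep (t := t)).mp (by omega)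
    linarith
  have : sol N c h t = G N c h ((m N c t - 1) + 1) t := by
    rw [sol, Nat.sub_add_cancel hm]
  rw [this]
  simp only [G, if_pos h1, if_neg (not_le.mpr ht), neg_inj]
  apply Finset.sum_congr rfl
  intro k hk
  apply eval hN hc0 hstep
  have := m_fwd hN hc0 hstep (Finset.mem_range.mp hk) ht
  omega

lemma sol_bwd {t : ℝ} (ht : t < 0) :
    sol N c h t = -∑ k ∈ Finset.range N, sol N c h (t + c (k+1)) := by
  have hm : 1 ≤ m N c t := by
    by_contra hcon
    obtain ⟨h2, -⟩ := (m_eq_zero_iff hN hc0 hstep (t := t)).mp (by omega)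
    linarith
  have : sol N c h t = G N c h ((m N c t - 1) + 1) t := by
    rw [sol, Nat.sub_add_cancel hm]
  rw [this]
  simp only [G, if_neg (not_le.mpr ht), neg_inj]
  apply Finset.sum_congr rfl
  intro k hk
  apply eval hN hc0 hstep
  have := m_bwd hN hc0 hstep (Finset.mem_range.mp hk) ht
  omega

lemma sol_eq (hs1 : ∀ t, t ≤ 0 → h t = 0) (hs2 : ∀ t, c 1 ≤ t → h t = 0) (t : ℝ) :
    ∑ k ∈ Finset.range (N+1), sol N c h (t + c k) = 0 := by
  rcases lt_trichotomy t 0 with ht | rfl | ht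
  · rw [Finset.sum_range_succ']
    have := sol_bwd hN hc0 hstep h ht
    rw [hc0, add_zero, this]
    simp [add_comm]
  · apply Finset.sum_eq_zero
    intro k hk
    have hk' : k ≤ N := by have := Finset.mem_range.mp hk; omega
    rw [zero_add, sol_mid hN hc0 hstep h (ck_nonneg hN hc0 hstep hk') (ck_le hN hc0 hstep hk')]
    rcases Nat.eq_zero_or_pos k with rfl | hk0
    · rw [hc0]; exact hs1 0 le_rfl
    · exact hs2 _ (c1_le hN hc0 hstep hk0 hk')
  · rw [Finset.sum_range_succ]
    have hcN : c N < t + c N := by linarith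
    rw [sol_fwd hN hc0 hstep h hcN]
    have : ∀ k ∈ Finset.range N, sol N c h (t + c N - c N + c k) = sol N c h (t + c k) := by
      intro k hk; congr 1; ring
    rw [Finset.sum_congr rfl this]
    ring

lemma Gmid : ∀ n t, 0 ≤ t → t ≤ c N → G N c h n t = h t := by
  intro n t h1 h2
  cases n with
  | zero => rfl
  | succ n => simp only [G, if_pos h1, if_pos h2]

lemma G_cont (hh : Continuous h) (hs1 : ∀ t, t ≤ 0 → h t = 0)
    (hs2 : ∀ t, c 1 ≤ t → h t = 0) : ∀ n, Continuous (G N c h n) := by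
  intro n
  induction n with
  | zero => exact hh
  | succ n ih =>
    have hsum0 : ∀ k, k ≤ N → G N c h n (c k) = 0 := by
      intro k hk
      rw [Gmid hN hc0 hstep h n (c k) (ck_nonneg hN hc0 hstep hk) (ck_le hN hc0 hstep hk)]
      rcases Nat.eq_zero_or_pos k with rfl | hk0
      · rw [hc0]; exact hs1 0 le_rfl
      · exact hs2 _ (c1_le hN hc0 hstep hk0 hk)
    have hA : Continuous fun t => -∑ k ∈ Finset.range N, G N c h n (t - c N + c k) := by
      apply Continuous.neg
      apply continuous_finset_sum
      intro k _
      exact ih.comp (by continuity)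
    have hB : Continuous fun t => -∑ k ∈ Finset.range N, G N c h n (t + c (k+1)) := by
      apply Continuous.neg
      apply continuous_finset_sum
      intro k _
      exact ih.comp (by continuity)
    have hinner : Continuous fun t =>
        if t ≤ c N then h t else -∑ k ∈ Finset.range N, G N c h n (t - c N + c k) := by
      apply Continuous.if_le hh hA continuous_id continuous_const
      intro t ht
      subst ht
      rw [hs2 _ (c1_le hN hc0 hstep hN le_rfl), eq_comm, neg_eq_zero]
      apply Finset.sum_eq_zero
      intro k hk
      have : c N - c N + c k = c k := by ring
      rw [this]
      exact hsum0 k (le_of_lt (Finset.mem_range.mp hk))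
    show Continuous fun t =>
      if 0 ≤ t then (if t ≤ c N then h t
        else -∑ k ∈ Finset.range N, G N c h n (t - c N + c k))
      else -∑ k ∈ Finset.range N, G N c h n (t + c (k+1))
    apply Continuous.if_le hinner hB continuous_const continuous_id
    intro t ht
    have ht0 : t = 0 := ht.symm
    subst ht0
    rw [if_pos (le_of_lt (cNpos hN hc0 hstep)), hs1 0 le_rfl, eq_comm, neg_eq_zero]
    apply Finset.sum_eq_zero
    intro k hk
    rw [zero_add]
    exact hsum0 (k+1) (Finset.mem_range.mp hk)

lemma sol_cont (hh : Continuous h) (hs1 : ∀ t, t ≤ 0 → h t = 0)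
    (hs2 : ∀ t, c 1 ≤ t → h t = 0) : Continuous (sol N c h) := by
  have hd := dpos hN hc0 hstep
  have hg := c1pos hN hc0 hstep
  rw [continuous_iff_continuousAt]
  intro t₀
  set n : ℕ := ⌈(|t₀| + 1 - c N) / (c N - c (N-1))⌉₊ + ⌈(|t₀| + 1) / c 1⌉₊ with hn
  have hbound : ∀ s ∈ Set.Ioo (t₀ - 1) (t₀ + 1), m N c s ≤ n := by
    intro s hs
    have h1 : s ≤ |t₀| + 1 := by
      have := hs.2; have := le_abs_self t₀; linarith
    have h2 : -s ≤ |t₀| + 1 := by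
      have := hs.1; have := neg_le_abs t₀; linarith
    apply Nat.add_le_add
    · exact Nat.ceil_le_ceil (by apply div_le_div_of_nonneg_right _ hd.le; linarith)
    · exact Nat.ceil_le_ceil (div_le_div_of_nonneg_right h2 hg.le)
  have hev : sol N c h =ᶠ[nhds t₀] G N c h n := by
    filter_upwards [Ioo_mem_nhds (by linarith : t₀ - 1 < t₀) (by linarith : t₀ < t₀ + 1)]
      with s hs
    exact (eval hN hc0 hstep h n s (hbound s hs)).symm
  exact ((G_cont hN hc0 hstep h hh hs1 hs2 n).continuousAt).congr hev.symm

end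

noncomputable def bump (t0 r t : ℝ) : ℝ := max 0 (1 - |t - t0| / r)

lemma bump_cont (t0 r : ℝ) : Continuous (bump t0 r) :=
  continuous_const.max
    (continuous_const.sub ((continuous_id.sub continuous_const).abs.div_const r))

lemma bump_self (t0 r : ℝ) : bump t0 r t0 = 1 := by
  simp [bump]

lemma bump_zero {t0 r t : ℝ} (hr : 0 < r) (h : r ≤ |t - t0|) : bump t0 r t = 0 := by
  apply max_eq_left
  have : 1 ≤ |t - t0| / r := (one_le_div hr).mpr h
  linarith

end Stmt9
/-- The set of continuous functions `f : (0, ∞) → ℝ` satisfying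
`f x + f (a 1 * x) + ⋯ + f (a N * x) = 0` for all `x > 0` is a vector subspace of
`C((0, ∞))` that is infinite dimensional. -/
theorem stmt_9 (N : ℕ) (hN : 1 ≤ N) (a : ℕ → ℝ) (ha0 : a 0 = 1)
    (hmono : ∀ k, k < N → a k < a (k + 1)) :
    ∃ S : Submodule ℝ C(Set.Ioi (0 : ℝ), ℝ),
      (∀ f : C(Set.Ioi (0 : ℝ), ℝ), f ∈ S ↔
        ∀ x : Set.Ioi (0 : ℝ),
          ∑ k ∈ Finset.range (N + 1),
            (if h : 0 < a k * (x : ℝ) then f ⟨a k * (x : ℝ), h⟩ else 0) = 0) ∧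
      ¬ Module.Finite ℝ S := by
  classical
  have aone : ∀ k, k ≤ N → 1 ≤ a k := by
    intro k
    induction k with
    | zero => intro _; rw [ha0]
    | succ k ih =>
      intro hk
      exact le_of_lt (lt_of_le_of_lt (ih (by omega)) (hmono k (by omega)))
  have apos : ∀ k, k ≤ N → 0 < a k := fun k hk => lt_of_lt_of_le one_pos (aone k hk)
  set c : ℕ → ℝ := fun k => Real.log (a k) with hcdef
  have hc0 : c 0 = 0 := by simp only [hcdef]; rw [ha0, Real.log_one]
  have hstep : ∀ k, k < N → c k < c (k + 1) := by
    intro k hk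
    exact Real.log_lt_log (apos k (le_of_lt hk)) (hmono k hk)
  have hc1pos : 0 < c 1 := Stmt9.c1pos hN hc0 hstep
  have hc1N : c 1 ≤ c N := Stmt9.c1_le hN hc0 hstep hN le_rfl
  let S : Submodule ℝ C(Set.Ioi (0 : ℝ), ℝ) :=
    { carrier := {f : C(Set.Ioi (0:ℝ), ℝ) | ∀ x : Set.Ioi (0:ℝ),
        ∑ k ∈ Finset.range (N + 1),
          (if h : 0 < a k * (x : ℝ) then f ⟨a k * (x : ℝ), h⟩ else 0) = 0}
      add_mem' := by
        intro f g hf hg x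
        have key : ∀ k ∈ Finset.range (N+1),
            (if h : 0 < a k * (x:ℝ) then (f+g) ⟨a k * (x:ℝ), h⟩ else 0)
            = (if h : 0 < a k * (x:ℝ) then f ⟨a k * (x:ℝ), h⟩ else 0)
              + (if h : 0 < a k * (x:ℝ) then g ⟨a k * (x:ℝ), h⟩ else 0) := by
          intro k _
          by_cases hk : 0 < a k * (x:ℝ)
          · rw [dif_pos hk, dif_pos hk, dif_pos hk]; rfl
          · rw [dif_neg hk, dif_neg hk, dif_neg hk, add_zero]
        rw [Finset.sum_congr rfl key, Finset.sum_add_distrib, hf x, hg x, add_zero]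
      zero_mem' := by
        intro x
        apply Finset.sum_eq_zero
        intro k _
        by_cases hk : 0 < a k * (x:ℝ)
        · rw [dif_pos hk]; rfl
        · rw [dif_neg hk]
      smul_mem' := by
        intro s f hf x
        have key : ∀ k ∈ Finset.range (N+1),
            (if h : 0 < a k * (x:ℝ) then (s • f) ⟨a k * (x:ℝ), h⟩ else 0)
            = s * (if h : 0 < a k * (x:ℝ) then f ⟨a k * (x:ℝ), h⟩ else 0) := by
          intro k _
          by_cases hk : 0 < a k * (x:ℝ)
          · rw [dif_pos hk, dif_pos hk]; rfl
          · rw [dif_neg hk, dif_neg hk, mul_zero]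
        rw [Finset.sum_congr rfl key, ← Finset.mul_sum, hf x, mul_zero] }
  refine ⟨S, fun f => Iff.rfl, ?_⟩
  intro hfin
  haveI := hfin
  set n : ℕ := Module.finrank ℝ S + 1 with hndef
  have hnn : (0:ℝ) < (n:ℝ) + 1 := by positivity
  set r : ℝ := c 1 / (2 * ((n:ℝ) + 1)) with hrdef
  have hrpos : 0 < r := by rw [hrdef]; positivity
  set T : Fin n → ℝ := fun j => c 1 * (((j:ℕ):ℝ) + 1) / ((n:ℝ) + 1) with hTdef
  have h2r : 2 * r = c 1 / ((n:ℝ) + 1) := by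
    rw [hrdef]; field_simp
  have hT2r : ∀ j : Fin n, 2*r ≤ T j := by
    intro j
    rw [h2r]; simp only [hTdef]
    rw [div_le_div_iff_of_pos_right hnn]
    nlinarith [show (0:ℝ) ≤ ((j:ℕ):ℝ) from Nat.cast_nonneg _]
  have hTub : ∀ j : Fin n, T j ≤ c 1 - 2*r := by
    intro j
    have hj : ((j:ℕ):ℝ) + 1 ≤ (n:ℝ) := by exact_mod_cast j.2
    rw [h2r]
    have hrw : c 1 - c 1 / ((n:ℝ)+1) = c 1 * (n:ℝ) / ((n:ℝ)+1) := by
      field_simp; ring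
    rw [hrw]; simp only [hTdef]
    rw [div_le_div_iff_of_pos_right hnn]
    nlinarith
  have hTpos : ∀ j : Fin n, 0 < T j := fun j => lt_of_lt_of_le (by linarith) (hT2r j)
  have hTlt : ∀ j : Fin n, T j < c 1 := fun j => lt_of_le_of_lt (hTub j) (by linarith)
  have hTsep : ∀ i j : Fin n, i ≠ j → 2*r ≤ |T i - T j| := by
    intro i j hij
    have hne : (i:ℕ) ≠ (j:ℕ) := fun h' => hij (Fin.ext h')
    have habs : (1:ℝ) ≤ |((i:ℕ):ℝ) - ((j:ℕ):ℝ)| := by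
      rcases Nat.lt_or_ge (i:ℕ) (j:ℕ) with hl | hl
      · have h1 : ((i:ℕ):ℝ) + 1 ≤ ((j:ℕ):ℝ) := by exact_mod_cast hl
        rw [abs_sub_comm, abs_of_nonneg (by linarith)]; linarith
      · have hl' : (j:ℕ) < (i:ℕ) := by omega
        have h1 : ((j:ℕ):ℝ) + 1 ≤ ((i:ℕ):ℝ) := by exact_mod_cast hl'
        rw [abs_of_nonneg (by linarith)]; linarith
    have hTd : T i - T j = c 1 * (((i:ℕ):ℝ) - ((j:ℕ):ℝ)) / ((n:ℝ)+1) := by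
      simp only [hTdef]; ring
    rw [hTd, h2r, abs_div, abs_of_pos hnn, abs_mul, abs_of_pos hc1pos,
      div_le_div_iff_of_pos_right hnn]
    nlinarith
  have hsupp1 : ∀ (j : Fin n) (t : ℝ), t ≤ 0 → Stmt9.bump (T j) r t = 0 := by
    intro j t ht
    apply Stmt9.bump_zero hrpos
    have h1 := hT2r j
    rw [abs_sub_comm, abs_of_nonneg (by linarith)]
    linarith
  have hsupp2 : ∀ (j : Fin n) (t : ℝ), c 1 ≤ t → Stmt9.bump (T j) r t = 0 := by
    intro j t ht
    apply Stmt9.bump_zero hrpos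
    have h1 := hTub j
    rw [abs_of_nonneg (by linarith)]
    linarith
  have hcont : ∀ j : Fin n,
      Continuous fun x : Set.Ioi (0:ℝ) => Stmt9.sol N c (Stmt9.bump (T j) r) (Real.log (x:ℝ)) := by
    intro j
    have h1 : Continuous (Stmt9.sol N c (Stmt9.bump (T j) r)) :=
      Stmt9.sol_cont hN hc0 hstep _ (Stmt9.bump_cont _ _) (hsupp1 j) (hsupp2 j)
    have h2 : Continuous fun x : Set.Ioi (0:ℝ) => Real.log (x:ℝ) :=
      Real.continuousOn_log.comp_continuous continuous_subtype_val
        (fun x => Set.mem_compl_singleton_iff.mpr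
          (ne_of_gt (Set.mem_Ioi.mp x.2)))
    exact h1.comp h2
  let Ffun : Fin n → C(Set.Ioi (0:ℝ), ℝ) := fun j => ⟨_, hcont j⟩
  have hFmem : ∀ j, Ffun j ∈ S := by
    intro j
    intro x
    have hx : (0:ℝ) < (x:ℝ) := Set.mem_Ioi.mp x.2
    have key : ∀ k ∈ Finset.range (N+1),
        (if h : 0 < a k * (x:ℝ) then Ffun j ⟨a k * (x:ℝ), h⟩ else 0)
          = Stmt9.sol N c (Stmt9.bump (T j) r) (Real.log (x:ℝ) + c k) := by
      intro k hk
      have hk' : k ≤ N := by have := Finset.mem_range.mp hk; omega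
      have hak : 0 < a k := apos k hk'
      have hpos : 0 < a k * (x:ℝ) := mul_pos hak hx
      rw [dif_pos hpos]
      show Stmt9.sol N c (Stmt9.bump (T j) r) (Real.log (a k * (x:ℝ))) = _
      rw [Real.log_mul (ne_of_gt hak) (ne_of_gt hx), add_comm]
    rw [Finset.sum_congr rfl key]
    exact Stmt9.sol_eq hN hc0 hstep _ (hsupp1 j) (hsupp2 j) (Real.log (x:ℝ))
  let F : Fin n → S := fun j => ⟨Ffun j, hFmem j⟩
  have hval : ∀ i j : Fin n,
      Ffun j (⟨Real.exp (T i), Set.mem_Ioi.mpr (Real.exp_pos _)⟩ : Set.Ioi (0:ℝ))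
        = if j = i then 1 else 0 := by
    intro i j
    show Stmt9.sol N c (Stmt9.bump (T j) r) (Real.log (Real.exp (T i))) = _
    rw [Real.log_exp,
      Stmt9.sol_mid hN hc0 hstep _ (le_of_lt (hTpos i)) (le_trans (le_of_lt (hTlt i)) hc1N)]
    by_cases hij : j = i
    · subst hij; rw [if_pos rfl]; exact Stmt9.bump_self _ _
    · rw [if_neg hij]
      apply Stmt9.bump_zero hrpos
      have := hTsep i j (fun h' => hij h'.symm)
      linarith
  have hLI : LinearIndependent ℝ F := by
    rw [Fintype.linearIndependent_iff]
    intro gc hsum i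
    set Xi : Set.Ioi (0:ℝ) := ⟨Real.exp (T i), Set.mem_Ioi.mpr (Real.exp_pos _)⟩ with hXi
    have h0 : ((∑ j, gc j • F j : S) : C(Set.Ioi (0:ℝ), ℝ)) Xi
        = ((0 : S) : C(Set.Ioi (0:ℝ), ℝ)) Xi := by rw [hsum]
    rw [Submodule.coe_sum] at h0
    simp only [SetLike.val_smul, ContinuousMap.coe_sum] at h0
    have h1 : ∑ j, gc j * (Ffun j Xi) = 0 := by
      simpa using h0
    rw [Finset.sum_congr rfl (fun j _ => by rw [hval i j])] at h1
    simpa using h1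
  have hcard := hLI.fintype_card_le_finrank
  rw [Fintype.card_fin] at hcard
  omega
end

section
/- Let N ≥ 1 and let 0 < b_1 < b_2 < ⋯ < b_N be real numbers. The equation g(w) + g(w + b_1) + ⋯ + g(w + b_N) = 0 (for all w ∈ ℝ) admits a continuous periodic solution g ≠ 0 (i.e., a nonzero continuous g : ℝ → ℝ for which there exists T > 0 with g(x + T) = g(x) for all x) if and only if there exists α ∈ ℝ such that 1 + ∑_{k=1}^N cos(α b_k) = 0 and ∑_{k=1}^N sin(α b_k) = 0. -/
open MeasureTheory Complex intervalIntegral Real AddCircle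

set_option maxHeartbeats 1000000 in
/-- the equation `g w + ∑_{k=1}^N g (w + b k) = 0` admits a nonzero
continuous periodic solution iff there is `α ∈ ℝ` with
`1 + ∑_{k=1}^N cos (α * b k) = 0` and `∑_{k=1}^N sin (α * b k) = 0`. -/
theorem stmt_11 (N : ℕ) (hN : 1 ≤ N) (b : ℕ → ℝ) (hb1 : 0 < b 1)
    (hmono : ∀ k, 1 ≤ k → k < N → b k < b (k + 1)) :
    (∃ g : ℝ → ℝ, Continuous g ∧ g ≠ 0 ∧ (∃ T > (0 : ℝ), ∀ x : ℝ, g (x + T) = g x) ∧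
        ∀ w : ℝ, g w + ∑ k ∈ Finset.Icc 1 N, g (w + b k) = 0) ↔
      ∃ α : ℝ,
        1 + ∑ k ∈ Finset.Icc 1 N, Real.cos (α * b k) = 0 ∧
        ∑ k ∈ Finset.Icc 1 N, Real.sin (α * b k) = 0 := by
  constructor
  · rintro ⟨g, hgc, hg0, ⟨T, hT, hper⟩, heq⟩
    by_contra hno
    push_neg at hno
    -- the complex symbol is nonvanishing
    have hP : ∀ α : ℝ, (1 : ℂ) + ∑ k ∈ Finset.Icc 1 N,
        Complex.exp ((α * b k : ℝ) * Complex.I) ≠ 0 := by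
      intro α h
      have hre := congrArg Complex.re h
      have him := congrArg Complex.im h
      simp only [Complex.add_re, Complex.one_re, Complex.re_sum, Complex.zero_re,
        Complex.add_im, Complex.one_im, Complex.im_sum, Complex.zero_im, zero_add,
        Complex.exp_ofReal_mul_I_re, Complex.exp_ofReal_mul_I_im] at hre him
      exact hno α hre him
    haveI : Fact (0 < T) := ⟨hT⟩
    set f : ℝ → ℂ := fun x => (g x : ℂ) with hf
    have hfc : Continuous f := Complex.continuous_ofReal.comp hgc
    have hfp : Function.Periodic f T := fun x => by simp [hf, hper x]
    set G : AddCircle T → ℂ := hfp.lift with hG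
    have hGc : Continuous G :=
      (QuotientAddGroup.isQuotientMap_mk _).continuous_iff.mpr hfc
    have key : ∀ n : ℤ, fourierCoeff G n = 0 := by
      intro n
      set e : ℝ → ℂ := fun x => Complex.exp (2 * π * Complex.I * (-n) * x / T) with he
      have hec : Continuous e :=
        Complex.continuous_exp.comp
          ((continuous_const.mul Complex.continuous_ofReal).div_const _)
      have hexT : ∀ x : ℝ, e (x + T) = e x := by
        intro x
        simp only [he]
        have hTC : (T : ℂ) ≠ 0 := by exact_mod_cast hT.ne'
        have harg : (2 * π * Complex.I * (-(n:ℂ)) * ((x : ℂ) + (T : ℂ)) / T) =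
            2 * π * Complex.I * (-(n:ℂ)) * x / T + (-n : ℤ) * (2 * π * Complex.I) := by
          field_simp
          push_cast
          ring
        push_cast
        rw [harg, Complex.exp_add, Complex.exp_int_mul_two_pi_mul_I, mul_one]
      have hep : Function.Periodic (fun x => e x * f x) T := by
        intro x
        simp only [hexT x, hfp x]
      -- shift formula
      have shift : ∀ d : ℝ, (∫ x in (0:ℝ)..T, e x * f (x + d)) =
          Complex.exp ((2 * π * n / T * d : ℝ) * Complex.I) * ∫ x in (0:ℝ)..T, e x * f x := by
        intro d
        have h1 : (∫ x in (0:ℝ)..T, e x * f (x + d)) =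
            ∫ x in (0:ℝ)+d..T+d, e (x - d) * f x := by
          rw [← intervalIntegral.integral_comp_add_right (fun x => e (x - d) * f x) d]
          simp
        have h2 : ∀ x : ℝ, e (x - d) =
            Complex.exp ((2 * π * n / T * d : ℝ) * Complex.I) * e x := by
          intro x
          simp only [he]
          rw [← Complex.exp_add]
          congr 1
          push_cast
          field_simp
          ring
        rw [h1]
        simp_rw [h2, mul_assoc]
        rw [intervalIntegral.integral_const_mul]
        congr 1
        have := hep.intervalIntegral_add_eq d 0
        simpa [zero_add, add_comm d T] using this
      -- integrate the functional equation
      have hint0 : (∫ x in (0:ℝ)..T, e x * (f x + ∑ k ∈ Finset.Icc 1 N, f (x + b k))) = 0 := by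
        have hz : ∀ x : ℝ, e x * (f x + ∑ k ∈ Finset.Icc 1 N, f (x + b k)) = 0 := by
          intro x
          have h := congrArg (Complex.ofReal) (heq x)
          push_cast at h
          have : f x + ∑ k ∈ Finset.Icc 1 N, f (x + b k) = 0 := by
            simpa [hf] using h
          rw [this, mul_zero]
        simp [hz]
      have I1 : IntervalIntegrable (fun x => e x * f x) volume 0 T :=
        (hec.mul hfc).intervalIntegrable _ _
      have I2 : ∀ k ∈ Finset.Icc 1 N,
          IntervalIntegrable (fun x => e x * f (x + b k)) volume 0 T :=
        fun k _ => (hec.mul (hfc.comp (continuous_id.add continuous_const))).intervalIntegrable _ _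
      have I3 : IntervalIntegrable
          (fun x => ∑ k ∈ Finset.Icc 1 N, e x * f (x + b k)) volume 0 T :=
        (continuous_finset_sum _ (fun k _ =>
          hec.mul (hfc.comp (continuous_id.add continuous_const)))).intervalIntegrable _ _
      have hsplit : (∫ x in (0:ℝ)..T, e x * (f x + ∑ k ∈ Finset.Icc 1 N, f (x + b k))) =
          (∫ x in (0:ℝ)..T, e x * f x) +
            ∑ k ∈ Finset.Icc 1 N, ∫ x in (0:ℝ)..T, e x * f (x + b k) := by
        simp_rw [mul_add, Finset.mul_sum]
        rw [intervalIntegral.integral_add I1 I3, intervalIntegral.integral_finset_sum I2]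
      have hfactor : (1 + ∑ k ∈ Finset.Icc 1 N,
          Complex.exp ((2 * π * n / T * b k : ℝ) * Complex.I)) *
            (∫ x in (0:ℝ)..T, e x * f x) = 0 := by
        rw [add_mul, one_mul, Finset.sum_mul]
        rw [hsplit] at hint0
        rw [← hint0]
        congr 1
        apply Finset.sum_congr rfl
        intro k _
        exact (shift (b k)).symm
      have hcn : (∫ x in (0:ℝ)..T, e x * f x) = 0 := by
        rcases mul_eq_zero.mp hfactor with h | h
        · exact absurd h (hP (2 * π * n / T))
        · exact h
      rw [fourierCoeff_eq_intervalIntegral G n 0, zero_add]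
      have hfe : ∀ x : ℝ, (fourier (-n) (x : AddCircle T)) • G (x : AddCircle T) = e x * f x := by
        intro x
        rw [fourier_coe_apply]
        simp only [smul_eq_mul, he]
        congr 2
        push_cast
        ring
      simp_rw [hfe]
      rw [hcn, smul_zero]
    -- uniqueness of Fourier coefficients
    have hGzero : G = 0 := by
      set Gc : C(AddCircle T, ℂ) := ⟨G, hGc⟩ with hGcdef
      have hLp : ContinuousMap.toLp (E := ℂ) 2 haarAddCircle ℂ Gc = 0 := by
        have hrepr : fourierBasis.repr (ContinuousMap.toLp (E := ℂ) 2 haarAddCircle ℂ Gc) = 0 := by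
          ext n
          rw [fourierBasis_repr, fourierCoeff_toLp]
          simpa [hGcdef] using key n
        exact (LinearIsometryEquiv.map_eq_zero_iff _).mp hrepr
      have hae : (G : AddCircle T → ℂ) =ᵐ[haarAddCircle] 0 := by
        have h1 := ContinuousMap.coeFn_toLp (p := 2) (μ := haarAddCircle) (𝕜 := ℂ) Gc
        rw [hLp] at h1
        exact h1.symm.trans (MeasureTheory.Lp.coeFn_zero _ _ _)
      exact (hGc.ae_eq_iff_eq haarAddCircle continuous_const).mp hae
    apply hg0
    funext x
    have h1 : G (x : AddCircle T) = 0 := by rw [hGzero]; rfl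
    have h2 : (g x : ℂ) = 0 := h1
    exact_mod_cast h2
  · rintro ⟨α, h1, h2⟩
    have hα : α ≠ 0 := by
      intro h
      rw [h] at h1
      simp at h1
      have hNpos : (0:ℝ) < (N:ℝ) := by exact_mod_cast hN
      linarith
    set β := |α| with hβdef
    have hβ : 0 < β := abs_pos.mpr hα
    have h1' : 1 + ∑ k ∈ Finset.Icc 1 N, Real.cos (β * b k) = 0 := by
      rcases abs_choice α with h | h
      · rw [hβdef, h]; exact h1
      · rw [hβdef, h]
        simpa [neg_mul, Real.cos_neg] using h1
    have h2' : ∑ k ∈ Finset.Icc 1 N, Real.sin (β * b k) = 0 := by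
      rcases abs_choice α with h | h
      · rw [hβdef, h]; exact h2
      · rw [hβdef, h]
        simp only [neg_mul, Real.sin_neg, Finset.sum_neg_distrib]
        rw [h2, neg_zero]
    refine ⟨fun w => Real.cos (β * w), by continuity, ?_, ⟨2 * π / β, by positivity, ?_⟩, ?_⟩
    · intro h
      have := congrFun h 0
      simp at this
    · intro x
      show Real.cos (β * (x + 2 * π / β)) = Real.cos (β * x)
      rw [mul_add, mul_div_cancel₀ _ hβ.ne']
      exact Real.cos_add_two_pi (β * x)
    · intro w
      show Real.cos (β * w) + ∑ k ∈ Finset.Icc 1 N, Real.cos (β * (w + b k)) = 0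
      simp_rw [mul_add, Real.cos_add]
      rw [Finset.sum_sub_distrib, ← Finset.mul_sum, ← Finset.mul_sum]
      have ec : ∑ k ∈ Finset.Icc 1 N, Real.cos (β * b k) = -1 := by linarith
      rw [ec, h2']
      ring
end

section
/- Let N ≥ 1, let d > 0, set b_k = k·d for k = 1, 2, …, N, and let m be a positive integer not divisible by N + 1. Then the equation g(w) + g(w + b_1) + ⋯ + g(w + b_N) = 0 (for all w ∈ ℝ) admits a nonzero continuous solution g : ℝ → ℝ of period T = d(N+1)/m, i.e., g(x + T) = g(x) for all x ∈ ℝ. -/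
/-- for `b k = k * d` (`d > 0`) and `m` a positive integer not divisible
by `N + 1`, the equation `g w + ∑_{k=1}^N g (w + k * d) = 0` admits a nonzero continuous
solution of period `T = d * (N + 1) / m`. -/
theorem stmt_15 (N : ℕ) (hN : 1 ≤ N) (d : ℝ) (hd : 0 < d) (m : ℕ) (hm0 : 0 < m)
    (hm : ¬ (N + 1) ∣ m) :
    ∃ g : ℝ → ℝ, Continuous g ∧ g ≠ 0 ∧
      (∀ x : ℝ, g (x + d * ((N : ℝ) + 1) / (m : ℝ)) = g x) ∧
      ∀ w : ℝ, g w + ∑ k ∈ Finset.Icc 1 N, g (w + (k : ℝ) * d) = 0 := by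
  have hN1 : ((N : ℝ) + 1) ≠ 0 := by positivity
  have hm' : (m : ℝ) ≠ 0 := Nat.cast_ne_zero.2 hm0.ne'
  have hd' : d ≠ 0 := hd.ne'
  have hpi : Real.pi ≠ 0 := Real.pi_ne_zero
  set c : ℝ := 2 * Real.pi * m / (d * ((N : ℝ) + 1)) with hc
  have hcd : c * d = 2 * Real.pi * m / ((N : ℝ) + 1) := by
    rw [hc]
    field_simp
  refine ⟨fun x => Real.cos (c * x), by continuity, ?_, ?_, ?_⟩
  · intro h
    have h0 := congrFun h 0
    simp at h0
  · intro x
    have hcT : c * (x + d * ((N : ℝ) + 1) / m) = c * x + 2 * Real.pi := by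
      rw [hc]
      field_simp
    simp only [hcT, Real.cos_add_two_pi]
  · intro w
    set z : ℂ := Complex.exp ((c * d : ℝ) * Complex.I) with hz
    have hz1 : z ≠ 1 := by
      intro h
      rw [hz, Complex.exp_eq_one_iff] at h
      obtain ⟨n, hn⟩ := h
      have hI : (Complex.I : ℂ) ≠ 0 := Complex.I_ne_zero
      have hn' : ((c * d : ℝ) : ℂ) = (n : ℂ) * (2 * Real.pi) := by
        apply mul_right_cancel₀ hI
        rw [hn]; ring
      have hre : (c * d : ℝ) = (n : ℝ) * (2 * Real.pi) := by
        exact_mod_cast hn'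
      rw [hcd] at hre
      have h2pi : (2 * Real.pi) ≠ 0 := by positivity
      have hmn : (m : ℝ) = (n : ℝ) * ((N : ℝ) + 1) := by
        apply mul_left_cancel₀ h2pi
        field_simp at hre
        linear_combination (2 * Real.pi) * hre
      have : (m : ℤ) = n * ((N : ℤ) + 1) := by exact_mod_cast hmn
      have hdvd : ((N : ℤ) + 1) ∣ (m : ℤ) := ⟨n, by linarith [this]⟩
      have : ((N + 1 : ℕ) : ℤ) ∣ (m : ℤ) := by push_cast; exact hdvd
      exact hm (Int.ofNat_dvd.mp (by exact_mod_cast this))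
    have hzpow : z ^ (N + 1) = 1 := by
      rw [hz, ← Complex.exp_nat_mul, Complex.exp_eq_one_iff]
      refine ⟨m, ?_⟩
      have : ((N : ℂ) + 1) ≠ 0 := by exact_mod_cast Complex.ofReal_ne_zero.2 hN1
      push_cast [hcd]
      field_simp
    have key : ∑ k ∈ Finset.range (N + 1),
        Complex.exp ((c * (w + (k : ℝ) * d) : ℝ) * Complex.I) = 0 := by
      have hterm : ∀ k : ℕ, Complex.exp ((c * (w + (k : ℝ) * d) : ℝ) * Complex.I)
          = Complex.exp ((c * w : ℝ) * Complex.I) * z ^ k := by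
        intro k
        rw [hz, ← Complex.exp_nat_mul, ← Complex.exp_add]
        congr 1
        push_cast
        ring
      rw [Finset.sum_congr rfl (fun k _ => hterm k), ← Finset.mul_sum,
        geom_sum_eq hz1, hzpow]
      simp
    have keyre : ∑ k ∈ Finset.range (N + 1), Real.cos (c * (w + (k : ℝ) * d)) = 0 := by
      have h := congrArg Complex.re key
      rw [Complex.re_sum] at h
      simp only [Complex.exp_ofReal_mul_I_re, Complex.zero_re] at h
      exact h
    have hsplit : ∑ k ∈ Finset.range (N + 1), Real.cos (c * (w + (k : ℝ) * d))
        = Real.cos (c * w) + ∑ k ∈ Finset.Icc 1 N, Real.cos (c * (w + (k : ℝ) * d)) := by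
      rw [Finset.sum_range_succ',
        show Finset.Icc 1 N = Finset.Ico 1 (N + 1) by rw [Finset.Ico_add_one_right_eq_Icc],
        Finset.sum_Ico_eq_sum_range]
      simp [Nat.add_comm]
      ring
    rw [hsplit] at keyre
    simpa using keyre
end

section
/- Let N ≥ 2. Define g : [0, N+1] → ℝ by g(x) = 1 for 0 ≤ x ≤ N−1, g(x) = −(N+1)x + N² for N−1 < x ≤ N, and g(x) = (N+1)x − N(N+2) for N < x ≤ N+1, and let g̃ : ℝ → ℝ be the (N+1)-periodic extension of g. Then g̃ is continuous, not identically zero, and satisfies g̃(x) + g̃(x+1) + g̃(x+2) + ⋯ + g̃(x+N) = 0 for all x ∈ ℝ. -/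
/-- the `(N+1)`-periodic extension `g̃` of the piecewise function
`g(x) = 1` on `[0, N-1]`, `g(x) = -(N+1)x + N²` on `(N-1, N]`,
`g(x) = (N+1)x - N(N+2)` on `(N, N+1]` is continuous, not identically zero, and
satisfies `g̃(x) + g̃(x+1) + ⋯ + g̃(x+N) = 0` for all `x ∈ ℝ`. -/
theorem stmt_16 (N : ℕ) (hN : 2 ≤ N) (g gt : ℝ → ℝ)
    (hg : g = fun x : ℝ =>
      if x ≤ (N : ℝ) - 1 then 1
      else if x ≤ (N : ℝ) then -((N : ℝ) + 1) * x + (N : ℝ) ^ 2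
      else ((N : ℝ) + 1) * x - (N : ℝ) * ((N : ℝ) + 2))
    (hper : ∀ x : ℝ, gt (x + ((N : ℝ) + 1)) = gt x)
    (hagree : ∀ x ∈ Set.Icc (0 : ℝ) ((N : ℝ) + 1), gt x = g x) :
    Continuous gt ∧ gt ≠ 0 ∧
      ∀ x : ℝ, gt x + ∑ k ∈ Finset.Icc 1 N, gt (x + (k : ℝ)) = 0 := by
  obtain ⟨M, rfl⟩ : ∃ M : ℕ, N = M + 2 := ⟨N - 2, by omega⟩
  have hMcast : ((M + 2 : ℕ) : ℝ) = (M : ℝ) + 2 := by push_cast; ring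
  have hM0 : (0 : ℝ) ≤ (M : ℝ) := Nat.cast_nonneg M
  obtain ⟨c, hc_def⟩ : ∃ c : ℝ, c = (M : ℝ) + 3 := ⟨_, rfl⟩
  have hc : (0 : ℝ) < c := by rw [hc_def]; positivity
  have hper' : Function.Periodic gt c := by
    intro x
    have := hper x
    rw [hMcast] at this
    convert this using 2
    rw [hc_def]; ring
  -- continuity of g
  have hgC : Continuous g := by
    rw [hg]
    apply Continuous.if_le continuous_const ?_ continuous_id continuous_const
    · intro x hx
      replace hx : x = ((M + 2 : ℕ) : ℝ) - 1 := hx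
      rw [if_pos (by rw [hx]; linarith), hx]
      ring
    · apply Continuous.if_le (by fun_prop) (by fun_prop) continuous_id continuous_const
      intro x hx
      replace hx : x = ((M + 2 : ℕ) : ℝ) := hx
      rw [hx]; ring
  -- gt on the interval [n*c, n*c + c]
  have key : ∀ n : ℤ, ∀ x ∈ Set.Icc ((n : ℝ) * c) ((n : ℝ) * c + c),
      gt x = g (x - (n : ℝ) * c) := by
    intro n x hx
    rw [← hper'.sub_int_mul_eq n]
    apply hagree
    rw [hMcast]
    constructor
    · have := hx.1; linarith
    · have := hx.2; linarith [hc_def.le, hc_def.ge]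
  -- continuity within each period interval
  have cw : ∀ n : ℤ, ∀ x : ℝ,
      ContinuousWithinAt gt (Set.Icc ((n : ℝ) * c) ((n : ℝ) * c + c)) x := by
    intro n x
    by_cases hx : x ∈ Set.Icc ((n : ℝ) * c) ((n : ℝ) * c + c)
    · have hcont : ContinuousWithinAt (fun y => g (y - (n : ℝ) * c))
          (Set.Icc ((n : ℝ) * c) ((n : ℝ) * c + c)) x :=
        ((hgC.comp (continuous_sub_right _)).continuousAt).continuousWithinAt
      exact hcont.congr (fun y hy => key n y hy) (key n x hx)
    · exact continuousWithinAt_of_notMem_closure (by rwa [isClosed_Icc.closure_eq])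
  have hgtC : Continuous gt := by
    rw [continuous_iff_continuousAt]
    intro x
    set n : ℤ := ⌊x / c⌋ with hn
    have h1 : (n : ℝ) * c ≤ x := by
      have h := Int.floor_le (x / c)
      rw [← hn] at h
      exact (le_div_iff₀ hc).mp h
    have h2 : x < (n : ℝ) * c + c := by
      have h := Int.lt_floor_add_one (x / c)
      rw [← hn] at h
      have h' := (div_lt_iff₀ hc).mp h
      nlinarith
    have hu : ContinuousWithinAt gt
        (Set.Icc (((n - 1 : ℤ) : ℝ) * c) (((n - 1 : ℤ) : ℝ) * c + c) ∪
          Set.Icc ((n : ℝ) * c) ((n : ℝ) * c + c)) x := (cw (n - 1) x).union (cw n x)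
    have hset : (Set.Icc (((n - 1 : ℤ) : ℝ) * c) (((n - 1 : ℤ) : ℝ) * c + c) ∪
          Set.Icc ((n : ℝ) * c) ((n : ℝ) * c + c)) =
        Set.Icc (((n - 1 : ℤ) : ℝ) * c) ((n : ℝ) * c + c) := by
      rw [show (((n - 1 : ℤ) : ℝ) * c + c) = (n : ℝ) * c by push_cast; ring]
      apply Set.Icc_union_Icc_eq_Icc
      · push_cast; nlinarith
      · linarith
    rw [hset] at hu
    apply hu.continuousAt
    apply Icc_mem_nhds
    · push_cast; nlinarith
    · exact h2
  refine ⟨hgtC, ?_, ?_⟩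
  · -- gt ≠ 0
    intro h
    have h0 : gt 0 = g 0 := hagree 0 ⟨le_rfl, by rw [hMcast]; linarith⟩
    rw [hg] at h0
    simp only [h, Pi.zero_apply] at h0
    rw [if_pos (by rw [hMcast]; linarith)] at h0
    norm_num at h0
  · -- the sum identity
    intro x
    have hrange : ∀ y : ℝ, gt y + ∑ k ∈ Finset.Icc 1 (M + 2), gt (y + (k : ℝ)) =
        ∑ k ∈ Finset.range (M + 3), gt (y + (k : ℝ)) := by
      intro y
      have hr : Finset.range (M + 3) = insert 0 (Finset.Icc 1 (M + 2)) := by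
        ext k; simp [Finset.mem_Icc, Finset.mem_range, Finset.mem_insert]; omega
      rw [hr, Finset.sum_insert (by simp)]
      norm_num
    rw [hrange]
    set S : ℝ → ℝ := fun y => ∑ k ∈ Finset.range (M + 3), gt (y + (k : ℝ)) with hS
    have hS1 : Function.Periodic S 1 := by
      intro y
      simp only [hS]
      conv_lhs => rw [Finset.sum_range_succ]
      conv_rhs => rw [Finset.sum_range_succ']
      congr 1
      · apply Finset.sum_congr rfl
        intro k _
        congr 1
        push_cast
        ring
      · rw [show y + 1 + ((M + 2 : ℕ) : ℝ) = (y + ((0 : ℕ) : ℝ)) + c by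
          rw [hMcast, hc_def]; push_cast; ring]
        exact hper' _
    have hfr : S (Int.fract x) = S x := by
      rw [Int.fract, show x - ((⌊x⌋ : ℤ) : ℝ) = x - ((⌊x⌋ : ℤ) : ℝ) * 1 by ring]
      exact hS1.sub_int_mul_eq ⌊x⌋
    show S x = 0
    rw [← hfr]
    obtain ⟨y, hy⟩ : ∃ y : ℝ, Int.fract x = y := ⟨_, rfl⟩
    rw [hy]
    have hy0 : 0 ≤ y := hy ▸ Int.fract_nonneg x
    have hy1 : y < 1 := hy ▸ Int.fract_lt_one x
    simp only [hS]
    have hval : ∀ k ∈ Finset.range (M + 3), gt (y + (k : ℝ)) = g (y + (k : ℝ)) := by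
      intro k hk
      apply hagree
      rw [hMcast]
      simp only [Finset.mem_range] at hk
      have hk' : (k : ℝ) ≤ (M : ℝ) + 2 := by exact_mod_cast Nat.lt_succ_iff.mp hk
      have hk0 : (0 : ℝ) ≤ (k : ℝ) := Nat.cast_nonneg k
      constructor
      · linarith
      · linarith
    rw [Finset.sum_congr rfl hval]
    rw [Finset.sum_range_succ, Finset.sum_range_succ]
    have hones : ∀ k ∈ Finset.range (M + 1), g (y + (k : ℝ)) = 1 := by
      intro k hk
      simp only [Finset.mem_range] at hk
      have hk' : (k : ℝ) ≤ (M : ℝ) := by exact_mod_cast Nat.lt_succ_iff.mp hk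
      rw [hg]
      simp only
      have hcond : y + (k : ℝ) ≤ ((M + 2 : ℕ) : ℝ) - 1 := by rw [hMcast]; linarith
      rw [if_pos hcond]
    rw [Finset.sum_congr rfl hones, Finset.sum_const, Finset.card_range, nsmul_eq_mul, mul_one]
    rw [hg]
    simp only
    push_cast
    split_ifs
    all_goals first
      | linarith
      | ring1
      | (have hy0' : y = 0 := by linarith
         linear_combination (-(M : ℝ) - 3) * hy0')
end

section
/- Let a > 0 and b > 0. The equation g(x) + g(x + a) + g(x + b) = 0 (for all x ∈ ℝ) admits a continuous periodic solution g ≠ 0 (i.e., a nonzero continuous g : ℝ → ℝ for which there exists T > 0 with g(x + T) = g(x) for all x) if and only if a/b belongs to the set { (2+3k)/(1+3m) : (m,k) ∈ ℤ² } ∪ { (1+3m)/(2+3k) : (m,k) ∈ ℤ² }. -/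
open Real Complex MeasureTheory AddCircle ContinuousMap Topology

private lemma cos23' : Real.cos (2*π/3) = -(1/2) := by
  have : (2*π/3 : ℝ) = π - π/3 := by ring
  rw [this, Real.cos_pi_sub, Real.cos_pi_div_three]

private lemma sin23' : Real.sin (2*π/3) = Real.sqrt 3 / 2 := by
  have : (2*π/3 : ℝ) = π - π/3 := by ring
  rw [this, Real.sin_pi_sub, Real.sin_pi_div_three]

private lemma angle_eq' (θ : ℝ) (h1 : Real.cos θ = -(1/2)) (h2 : Real.sin θ = Real.sqrt 3 / 2) :
    ∃ m : ℤ, θ = 2*π/3 + 2*π*m := by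
  have hexp : Complex.exp (θ * Complex.I) = Complex.exp ((2*π/3 : ℝ) * Complex.I) := by
    rw [Complex.exp_mul_I, Complex.exp_mul_I, ← Complex.ofReal_cos, ← Complex.ofReal_sin,
      ← Complex.ofReal_cos, ← Complex.ofReal_sin, h1, h2, cos23', sin23']
  obtain ⟨m, hm⟩ := Complex.exp_eq_exp_iff_exists_int.mp hexp
  refine ⟨m, ?_⟩
  have h3 : ((θ : ℂ)) * Complex.I = ((2*π/3 + 2*π*m : ℝ) : ℂ) * Complex.I := by
    push_cast at hm ⊢; linear_combination hm
  have h4 := mul_right_cancel₀ Complex.I_ne_zero h3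
  exact_mod_cast h4

private lemma angle_eq'' (θ : ℝ) (h1 : Real.cos θ = -(1/2))
    (h2 : Real.sin θ = -(Real.sqrt 3 / 2)) :
    ∃ m : ℤ, θ = -(2*π/3) + 2*π*m := by
  obtain ⟨m, hm⟩ := angle_eq' (-θ) (by rwa [Real.cos_neg]) (by rw [Real.sin_neg, h2]; ring)
  exact ⟨-m, by push_cast; linarith⟩

private lemma coskey' (θ : ℝ) : Real.cos θ + Real.cos (θ + 2*π/3) + Real.cos (θ + 4*π/3) = 0 := by
  have h43 : (4*π/3 : ℝ) = 2*π/3 + 2*π/3 := by ring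
  have hc : Real.cos (4*π/3) = -(1/2) := by
    rw [h43, Real.cos_add, cos23', sin23']
    have : Real.sqrt 3 ^ 2 = 3 := Real.sq_sqrt (by norm_num)
    nlinarith
  have hs : Real.sin (4*π/3) = -(Real.sqrt 3/2) := by
    rw [h43, Real.sin_add, cos23', sin23']; ring
  rw [Real.cos_add, Real.cos_add, cos23', sin23', hc, hs]; ring

private lemma fourier_pt_add' {T : ℝ} (n : ℤ) (p q : AddCircle T) :
    fourier n (p + q) = fourier n p * fourier n q := by
  simp_rw [fourier_apply, smul_add, toCircle_add, Circle.coe_mul]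

private lemma fourier_pt_mul_inv' {T : ℝ} (n : ℤ) (p : AddCircle T) :
    fourier n p * fourier (-n) p = 1 := by
  rw [← fourier_add']
  simp

private lemma fourierCoeff_translate' {T : ℝ} [hT : Fact (0 < T)] (F : AddCircle T → ℂ)
    (n : ℤ) (c : ℝ) :
    fourierCoeff (fun p => F (p + (c : AddCircle T))) n
      = fourier n (c : AddCircle T) * fourierCoeff F n := by
  rw [fourierCoeff_eq_intervalIntegral _ n 0, fourierCoeff_eq_intervalIntegral F n 0]
  set ψ : ℝ → ℂ := fun x => fourier (-n) ((x : ℝ) : AddCircle T) • F ((x : ℝ) : AddCircle T)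
    with hψdef
  have hψ : Function.Periodic ψ T := by
    intro x
    simp only [hψdef]
    congr 1 <;> rw [AddCircle.coe_add_period]
  have hint : ∀ x : ℝ, fourier (-n) ((x : ℝ) : AddCircle T) •
      F (((x : ℝ) : AddCircle T) + (c : AddCircle T))
      = fourier n (c : AddCircle T) • ψ (x + c) := by
    intro x
    have hcoe : (((x + c : ℝ)) : AddCircle T) = ((x : ℝ) : AddCircle T) + (c : AddCircle T) := rfl
    simp only [hψdef, smul_eq_mul, hcoe]
    rw [fourier_pt_add']
    have h1 := fourier_pt_mul_inv' n ((c : ℝ) : AddCircle T)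
    linear_combination ((fourier (-n)) ((x : ℝ) : AddCircle T) *
      F (((x:ℝ) : AddCircle T) + (c : AddCircle T))) * h1.symm
  simp only [hint]
  rw [intervalIntegral.integral_smul]
  have h2 : ∫ x in (0:ℝ)..0 + T, ψ (x + c) = ∫ x in (0:ℝ)..0+T, ψ x := by
    rw [intervalIntegral.integral_comp_add_right]
    have h3 := hψ.intervalIntegral_add_eq (0 + c) 0
    simp only [zero_add] at h3 ⊢
    rw [add_comm T c]
    exact h3
  rw [h2, smul_comm]
  rfl

private lemma cont_integrable' {T : ℝ} [hT : Fact (0 < T)] {F : AddCircle T → ℂ}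
    (hF : Continuous F) : Integrable F (@haarAddCircle T hT) :=
  hF.integrable_of_hasCompactSupport
    (IsCompact.of_isClosed_subset isCompact_univ (isClosed_tsupport F) (Set.subset_univ _))

private lemma fourierCoeff_add_cont' {T : ℝ} [hT : Fact (0 < T)] {F G : AddCircle T → ℂ}
    (hF : Continuous F) (hG : Continuous G) (n : ℤ) :
    fourierCoeff (fun p => F p + G p) n = fourierCoeff F n + fourierCoeff G n := by
  unfold fourierCoeff
  have key : ∫ (t : AddCircle T), (fourier (-n)) t • (F t + G t) ∂haarAddCircle =
      (∫ (t : AddCircle T), (fourier (-n)) t • F t ∂haarAddCircle) +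
      ∫ (t : AddCircle T), (fourier (-n)) t • G t ∂haarAddCircle := by
    erw [← integral_add (cont_integrable' ((fourier (-n)).continuous.smul hF))
      (cont_integrable' ((fourier (-n)).continuous.smul hG))]
    apply integral_congr_ae; filter_upwards with p; simp [smul_eq_mul]; ring
  exact key

private lemma fourierCoeff_zero_fn' {T : ℝ} [hT : Fact (0 < T)] (n : ℤ) :
    fourierCoeff (fun _ : AddCircle T => (0:ℂ)) n = 0 := by
  unfold fourierCoeff
  simp

private lemma eq_zero_of_fourierCoeff' {T : ℝ} [hT : Fact (0 < T)] (F : C(AddCircle T, ℂ))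
    (h : ∀ n, fourierCoeff (⇑F) n = 0) : F = 0 := by
  have h1 : ContinuousMap.toLp (E := ℂ) 2 (@haarAddCircle T hT) ℂ F = 0 := by
    apply (@fourierBasis T hT).repr.injective
    ext i
    rw [fourierBasis_repr, fourierCoeff_toLp, h i, map_zero]
    rfl
  rw [← map_zero (ContinuousMap.toLp (E := ℂ) 2 (@haarAddCircle T hT) ℂ)] at h1
  exact ContinuousMap.toLp_injective (@haarAddCircle T hT) h1

/-- for `a, b > 0`, the equation `g x + g (x + a) + g (x + b) = 0` admits
a nonzero continuous periodic solution iff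
`a / b ∈ {(2+3k)/(1+3m) : m, k ∈ ℤ} ∪ {(1+3m)/(2+3k) : m, k ∈ ℤ}`. -/
theorem stmt_17 (a b : ℝ) (ha : 0 < a) (hb : 0 < b) :
    (∃ g : ℝ → ℝ, Continuous g ∧ g ≠ 0 ∧ (∃ T > (0 : ℝ), ∀ x : ℝ, g (x + T) = g x) ∧
        ∀ x : ℝ, g x + g (x + a) + g (x + b) = 0) ↔
      ∃ m k : ℤ,
        a / b = (2 + 3 * (k : ℝ)) / (1 + 3 * (m : ℝ)) ∨
        a / b = (1 + 3 * (m : ℝ)) / (2 + 3 * (k : ℝ)) := by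
  constructor
  · rintro ⟨g, hgc, hg0, ⟨T, hT0, hTper⟩, heq⟩
    haveI : Fact (0 < T) := ⟨hT0⟩
    have hT' : (T:ℝ) ≠ 0 := ne_of_gt hT0
    set f : ℝ → ℂ := fun x => (g x : ℂ) with hfdef
    have hper : Function.Periodic f T := fun x => by simp [hfdef, hTper x]
    set F : AddCircle T → ℂ := hper.lift with hFdef
    have hFcoe : ∀ x : ℝ, F ((x : ℝ) : AddCircle T) = f x := fun x => hper.lift_coe x
    have hFcont : Continuous F := by
      have hq : IsQuotientMap (QuotientAddGroup.mk : ℝ → AddCircle T) :=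
        isQuotientMap_quotient_mk'
      rw [hq.continuous_iff]
      have : (F ∘ (QuotientAddGroup.mk : ℝ → AddCircle T)) = f := by
        funext x; exact hFcoe x
      rw [this]
      exact Complex.continuous_ofReal.comp hgc
    have hFeq : ∀ p : AddCircle T,
        F p + (F (p + ((a:ℝ) : AddCircle T)) + F (p + ((b:ℝ) : AddCircle T))) = 0 := by
      intro p
      induction p using QuotientAddGroup.induction_on with
      | H x =>
        have h1 : ((x : ℝ) : AddCircle T) + ((a:ℝ) : AddCircle T) = (((x + a : ℝ)) : AddCircle T) := rfl
        have h2 : ((x : ℝ) : AddCircle T) + ((b:ℝ) : AddCircle T) = (((x + b : ℝ)) : AddCircle T) := rfl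
        rw [h1, h2, hFcoe, hFcoe, hFcoe]
        have hx3 : g x + (g (x + a) + g (x + b)) = 0 := by linarith [heq x]
        simp only [hfdef]
        exact_mod_cast hx3
    have hrel : ∀ n : ℤ, (1 + fourier n ((a:ℝ) : AddCircle T) + fourier n ((b:ℝ) : AddCircle T))
        * fourierCoeff F n = 0 := by
      intro n
      have hca : Continuous (fun p : AddCircle T => F (p + ((a:ℝ) : AddCircle T))) :=
        hFcont.comp (continuous_id.add continuous_const)
      have hcb : Continuous (fun p : AddCircle T => F (p + ((b:ℝ) : AddCircle T))) :=
        hFcont.comp (continuous_id.add continuous_const)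
      have h1 : fourierCoeff (fun p => F p + (F (p + ((a:ℝ) : AddCircle T)) +
          F (p + ((b:ℝ) : AddCircle T)))) n = 0 := by
        have hz : (fun p => F p + (F (p + ((a:ℝ) : AddCircle T)) + F (p + ((b:ℝ) : AddCircle T))))
            = (fun _ : AddCircle T => (0:ℂ)) := by
          funext p; exact hFeq p
        rw [hz, fourierCoeff_zero_fn']
      rw [fourierCoeff_add_cont' (G := fun p => F (p + ((a:ℝ) : AddCircle T)) + F (p + ((b:ℝ) : AddCircle T))) hFcont (hca.add hcb) n,
        fourierCoeff_add_cont' hca hcb n,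
        fourierCoeff_translate' F n a, fourierCoeff_translate' F n b] at h1
      linear_combination h1
    have hex : ∃ n : ℤ, fourierCoeff F n ≠ 0 := by
      by_contra hno
      push_neg at hno
      have hF0 : (⟨F, hFcont⟩ : C(AddCircle T, ℂ)) = 0 := eq_zero_of_fourierCoeff' _ hno
      apply hg0
      funext x
      have hx := DFunLike.congr_fun hF0 ((x : ℝ) : AddCircle T)
      simp only [ContinuousMap.coe_mk, ContinuousMap.zero_apply] at hx
      rw [hFcoe x] at hx
      simp only [hfdef] at hx
      show g x = (0:ℝ)
      exact_mod_cast hx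
    obtain ⟨n, hn⟩ := hex
    have hkey : 1 + fourier n ((a:ℝ) : AddCircle T) + fourier n ((b:ℝ) : AddCircle T) = 0 := by
      rcases mul_eq_zero.mp (hrel n) with h | h
      · exact h
      · exact absurd h hn
    have hn0 : n ≠ 0 := by
      rintro rfl
      rw [fourier_zero, fourier_zero] at hkey
      norm_num at hkey
    set α : ℝ := 2*π*n*a/T with hαdef
    set β : ℝ := 2*π*n*b/T with hβdef
    have hza : fourier n ((a:ℝ) : AddCircle T) = Complex.exp ((α:ℂ) * Complex.I) := by
      rw [fourier_coe_apply]
      congr 1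
      push_cast [hαdef]
      field_simp
    have hzb : fourier n ((b:ℝ) : AddCircle T) = Complex.exp ((β:ℂ) * Complex.I) := by
      rw [fourier_coe_apply]
      congr 1
      push_cast [hβdef]
      field_simp
    rw [hza, hzb] at hkey
    have hre : 1 + Real.cos α + Real.cos β = 0 := by
      have := congrArg Complex.re hkey
      simpa [Complex.exp_ofReal_mul_I_re] using this
    have him : Real.sin α + Real.sin β = 0 := by
      have := congrArg Complex.im hkey
      simpa [Complex.exp_ofReal_mul_I_im] using this
    have hpyα := Real.sin_sq_add_cos_sq α
    have hpyβ := Real.sin_sq_add_cos_sq β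
    have hsb : Real.sin β = -Real.sin α := by linarith
    have hcb2 : Real.cos β = -1 - Real.cos α := by linarith
    rw [hsb, hcb2] at hpyβ
    have hcα : Real.cos α = -(1/2) := by nlinarith [hpyα, hpyβ]
    have hcβ : Real.cos β = -(1/2) := by linarith
    have hs3 : (Real.sqrt 3 / 2)^2 = 3/4 := by
      rw [div_pow, Real.sq_sqrt] <;> norm_num
    have hsval : Real.sin α = Real.sqrt 3/2 ∨ Real.sin α = -(Real.sqrt 3/2) := by
      have hsq : Real.sin α ^ 2 = (Real.sqrt 3/2)^2 := by rw [hs3]; nlinarith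
      exact sq_eq_sq_iff_eq_or_eq_neg.mp hsq
    have h2pi : (2*π : ℝ) ≠ 0 := by positivity
    have h3n : (3*(n:ℝ)) ≠ 0 := by
      simp only [ne_eq, mul_eq_zero]
      push_neg
      exact ⟨by norm_num, Int.cast_ne_zero.mpr hn0⟩
    rcases hsval with hs | hs
    · -- sin α = √3/2 : α ≡ 2π/3, β ≡ -2π/3, a/b = (1+3m)/(2+3k)
      obtain ⟨m, hm⟩ := angle_eq' α hcα hs
      obtain ⟨k, hk⟩ := angle_eq'' β hcβ (by linarith)
      have hA : 3*(n:ℝ)*a = (1+3*(m:ℝ))*T := by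
        rw [hαdef] at hm
        have h2 : 2*π*(3*(n:ℝ)*a) = 2*π*((1+3*(m:ℝ))*T) := by
          field_simp at hm
          linear_combination 2*π*hm
        exact mul_left_cancel₀ h2pi h2
      have hB : 3*(n:ℝ)*b = (2+3*((k:ℝ)-1))*T := by
        rw [hβdef] at hk
        have h2 : 2*π*(3*(n:ℝ)*b) = 2*π*((2+3*((k:ℝ)-1))*T) := by
          field_simp at hk
          linear_combination 2*π*hk
        exact mul_left_cancel₀ h2pi h2
      refine ⟨m, k-1, Or.inr ?_⟩
      have h2k : ((2:ℝ)+3*((k-1:ℤ):ℝ)) ≠ 0 := by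
        have hz : (2+3*(k-1):ℤ) ≠ 0 := by omega
        have : ((2+3*(k-1):ℤ):ℝ) ≠ 0 := Int.cast_ne_zero.mpr hz
        push_cast at this ⊢
        convert this using 2
      rw [div_eq_div_iff (ne_of_gt hb) h2k]
      apply mul_left_cancel₀ h3n
      push_cast
      linear_combination (2+3*((k:ℝ)-1))*hA - (1+3*(m:ℝ))*hB
    · -- sin α = -√3/2 : α ≡ -2π/3, β ≡ 2π/3, a/b = (2+3k)/(1+3m)
      obtain ⟨m, hm⟩ := angle_eq'' α hcα hs
      obtain ⟨k, hk⟩ := angle_eq' β hcβ (by linarith)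
      have hA : 3*(n:ℝ)*a = (2+3*((m:ℝ)-1))*T := by
        rw [hαdef] at hm
        have h2 : 2*π*(3*(n:ℝ)*a) = 2*π*((2+3*((m:ℝ)-1))*T) := by
          field_simp at hm
          linear_combination 2*π*hm
        exact mul_left_cancel₀ h2pi h2
      have hB : 3*(n:ℝ)*b = (1+3*(k:ℝ))*T := by
        rw [hβdef] at hk
        have h2 : 2*π*(3*(n:ℝ)*b) = 2*π*((1+3*(k:ℝ))*T) := by
          field_simp at hk
          linear_combination 2*π*hk
        exact mul_left_cancel₀ h2pi h2
      refine ⟨k, m-1, Or.inl ?_⟩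
      have h1m : ((1:ℝ)+3*((k:ℤ):ℝ)) ≠ 0 := by
        have hz : (1+3*k:ℤ) ≠ 0 := by omega
        have : ((1+3*k:ℤ):ℝ) ≠ 0 := Int.cast_ne_zero.mpr hz
        push_cast at this ⊢
        convert this using 2
      rw [div_eq_div_iff (ne_of_gt hb) h1m]
      apply mul_left_cancel₀ h3n
      push_cast
      linear_combination (1+3*(k:ℝ))*hA - (2+3*((m:ℝ)-1))*hB
  · rintro ⟨m, k, hcase⟩
    have hb' : b ≠ 0 := ne_of_gt hb
    obtain ⟨c, hc, M, K, hab⟩ : ∃ c > 0, ∃ M K : ℤ,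
        (a = c*(1+3*(M:ℝ)) ∧ b = c*(2+3*(K:ℝ))) ∨ (a = c*(2+3*(K:ℝ)) ∧ b = c*(1+3*(M:ℝ))) := by
      rcases hcase with h | h
      · -- a/b = (2+3k)/(1+3m)
        have hqZ : (1+3*m:ℤ) ≠ 0 := by omega
        have hq : ((1:ℝ)+3*(m:ℝ)) ≠ 0 := by
          have := (Int.cast_ne_zero (α := ℝ)).mpr hqZ
          push_cast at this
          convert this using 2
        rw [div_eq_div_iff hb' hq] at h
        rcases lt_or_gt_of_ne hqZ with hqneg | hqpos
        · have hqneg' : ((1:ℝ)+3*m) < 0 := by exact_mod_cast hqneg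
          have hcne : (-((1:ℝ)+3*(m:ℝ))) ≠ 0 := ne_of_gt (by linarith)
          refine ⟨b/(-(1+3*(m:ℝ))), div_pos hb (by linarith), -1-k, -1-m, Or.inl ⟨?_, ?_⟩⟩
          · push_cast
            rw [div_mul_eq_mul_div, eq_div_iff hcne]
            linear_combination -h
          · push_cast
            rw [div_mul_eq_mul_div, eq_div_iff hcne]
            ring
        · have hqpos' : (0:ℝ) < 1+3*(m:ℝ) := by exact_mod_cast hqpos
          refine ⟨b/(1+3*(m:ℝ)), div_pos hb hqpos', m, k, Or.inr ⟨?_, ?_⟩⟩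
          · rw [div_mul_eq_mul_div, eq_div_iff (ne_of_gt hqpos')]
            linear_combination h
          · rw [div_mul_eq_mul_div, eq_div_iff (ne_of_gt hqpos')]
      · -- a/b = (1+3m)/(2+3k)
        have hqZ : (2+3*k:ℤ) ≠ 0 := by omega
        have hq : ((2:ℝ)+3*(k:ℝ)) ≠ 0 := by
          have := (Int.cast_ne_zero (α := ℝ)).mpr hqZ
          push_cast at this
          convert this using 2
        rw [div_eq_div_iff hb' hq] at h
        rcases lt_or_gt_of_ne hqZ with hqneg | hqpos
        · have hqneg' : ((2:ℝ)+3*k) < 0 := by exact_mod_cast hqneg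
          have hcne : (-((2:ℝ)+3*(k:ℝ))) ≠ 0 := ne_of_gt (by linarith)
          refine ⟨b/(-(2+3*(k:ℝ))), div_pos hb (by linarith), -1-k, -1-m, Or.inr ⟨?_, ?_⟩⟩
          · push_cast
            rw [div_mul_eq_mul_div, eq_div_iff hcne]
            linear_combination -h
          · push_cast
            rw [div_mul_eq_mul_div, eq_div_iff hcne]
            ring
        · have hqpos' : (0:ℝ) < 2+3*(k:ℝ) := by exact_mod_cast hqpos
          refine ⟨b/(2+3*(k:ℝ)), div_pos hb hqpos', m, k, Or.inl ⟨?_, ?_⟩⟩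
          · rw [div_mul_eq_mul_div, eq_div_iff (ne_of_gt hqpos')]
            linear_combination h
          · rw [div_mul_eq_mul_div, eq_div_iff (ne_of_gt hqpos')]
    have hc' : (3*c : ℝ) ≠ 0 := by positivity
    refine ⟨fun x => Real.cos (2*π*x/(3*c)), by fun_prop, ?_, ⟨3*c, by positivity, ?_⟩, ?_⟩
    · intro hzero
      have h0 := congrFun hzero 0
      simp only [Pi.zero_apply] at h0
      rw [mul_zero, zero_div, Real.cos_zero] at h0
      norm_num at h0
    · intro x
      show Real.cos (2*π*(x+3*c)/(3*c)) = Real.cos (2*π*x/(3*c))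
      have hx : 2*π*(x+3*c)/(3*c) = 2*π*x/(3*c) + 2*π := by
        field_simp
      rw [hx, Real.cos_add_two_pi]
    · intro x
      show Real.cos (2*π*x/(3*c)) + Real.cos (2*π*(x+a)/(3*c)) + Real.cos (2*π*(x+b)/(3*c)) = 0
      set θ : ℝ := 2*π*x/(3*c) with hθ
      rcases hab with ⟨hA, hB⟩ | ⟨hA, hB⟩
      · have h1 : 2*π*(x+a)/(3*c) = (θ + 2*π/3) + M*(2*π) := by
          rw [hA, hθ]; field_simp; ring
        have h2 : 2*π*(x+b)/(3*c) = (θ + 4*π/3) + K*(2*π) := by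
          rw [hB, hθ]; field_simp; ring
        rw [h1, h2, Real.cos_add_int_mul_two_pi, Real.cos_add_int_mul_two_pi]
        exact coskey' θ
      · have h1 : 2*π*(x+a)/(3*c) = (θ + 4*π/3) + K*(2*π) := by
          rw [hA, hθ]; field_simp; ring
        have h2 : 2*π*(x+b)/(3*c) = (θ + 2*π/3) + M*(2*π) := by
          rw [hB, hθ]; field_simp; ring
        rw [h1, h2, Real.cos_add_int_mul_two_pi, Real.cos_add_int_mul_two_pi]
        have := coskey' θ
        linarith
end
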